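/- arXiv:math/0202295 — 2 statements merged into one kernel-verified Lean document; each statement's English description precedes it below -/
import Mathlib

section
/- The map sending each hexagonal cell to the pair of square cells whose diagonally opposite corners lie in that hexagon defines a bijection between hexagonal lattice animals with n cells and parity polyominoes with 2n square cells. -/
/-- Adjacency of hexagonal cells, in axial coordinates: each cell has six neighbours. -/
def HexAdj (a b : ℤ × ℤ) : Prop :=
  b - a ∈ ({(1,0), (-1,0), (0,1), (0,-1), (1,-1), (-1,1)} : Set (ℤ × ℤ))

/-- A hexagonal lattice animal with `n` cells: a nonempty, edge-connected set of `n`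
hexagonal cells. -/
def IsHexAnimal (n : ℕ) (S : Finset (ℤ × ℤ)) : Prop :=
  S.card = n ∧ S.Nonempty ∧
    ∀ a ∈ S, ∀ b ∈ S,
      Relation.ReflTransGen (fun p q => p ∈ S ∧ q ∈ S ∧ HexAdj p q) a b

/-- Translation of a set of cells by a lattice vector. -/
def translateSet (v : ℤ × ℤ) (S : Finset (ℤ × ℤ)) : Finset (ℤ × ℤ) :=
  S.image fun p => p + v

/-- Two sets of cells are equivalent when one is a translate of the other. -/
def TransEquiv (S T : Finset (ℤ × ℤ)) : Prop := ∃ v, translateSet v S = T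

/-- The number of hexagonal lattice animals with `n` cells, up to translation. -/
noncomputable def hexCount (n : ℕ) : ℕ :=
  Nat.card (Quot (fun S T : {S : Finset (ℤ × ℤ) // IsHexAnimal n S} => TransEquiv S.1 T.1))

/-- The doubling map: each hexagonal cell `(x, y)` is replaced by the vertical domino of
the two square cells `(x, x + 2y)` and `(x, x + 2y + 1)`, so adjacent hexagonal columns
are vertically offset by one square unit. -/
def hexToSq (S : Finset (ℤ × ℤ)) : Finset (ℤ × ℤ) :=
  S.biUnion fun p => {(p.1, p.1 + 2 * p.2), (p.1, p.1 + 2 * p.2 + 1)}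

/-- Adjacency of square lattice cells. -/
def SqAdj (a b : ℤ × ℤ) : Prop :=
  b - a ∈ ({(1,0), (-1,0), (0,1), (0,-1)} : Set (ℤ × ℤ))

/-- A (square-lattice) polyomino: a nonempty edge-connected set of square cells. -/
def IsPolyomino (S : Finset (ℤ × ℤ)) : Prop :=
  S.Nonempty ∧
    ∀ a ∈ S, ∀ b ∈ S,
      Relation.ReflTransGen (fun p q => p ∈ S ∧ q ∈ S ∧ SqAdj p q) a b

/-- A parity polyomino: a square-lattice polyomino such that in each column there is a
parity `ε x` for which the cells of the column pair up into vertical dominoes whose lower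
cells have `y ≡ ε x (mod 2)` (equivalently, every maximal vertical run has even length and
all runs of a column start at `y`-coordinates of the same parity `ε x`), and the parities
of adjacent (occupied) columns differ. -/
def IsParityPoly (S : Finset (ℤ × ℤ)) : Prop :=
  IsPolyomino S ∧
    ∃ ε : ℤ → ℤ,
      (∀ x y : ℤ, (x, y) ∈ S →
        ((y - ε x) % 2 = 0 → (x, y + 1) ∈ S) ∧ ((y - ε x) % 2 ≠ 0 → (x, y - 1) ∈ S)) ∧
      (∀ x : ℤ, (∃ y, (x, y) ∈ S) → (∃ y, (x + 1, y) ∈ S) → (ε (x + 1) - ε x) % 2 ≠ 0)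


open Relation Finset

lemma mem_hexToSq {S : Finset (ℤ × ℤ)} {x y : ℤ} :
    (x, y) ∈ hexToSq S ↔ ∃ k, (x, k) ∈ S ∧ (y = x + 2*k ∨ y = x + 2*k + 1) := by
  simp only [hexToSq, Finset.mem_biUnion, Finset.mem_insert, Finset.mem_singleton,
    Prod.ext_iff]
  constructor
  · rintro ⟨⟨a, b⟩, hab, (⟨h1, h2⟩ | ⟨h1, h2⟩)⟩ <;> subst h1 <;>
      exact ⟨b, hab, by omega⟩
  · rintro ⟨k, hk, h⟩
    exact ⟨(x, k), hk, by rcases h with h | h <;> simp <;> omega⟩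

lemma card_hexToSq (S : Finset (ℤ × ℤ)) : (hexToSq S).card = 2 * S.card := by
  rw [hexToSq, Finset.card_biUnion]
  · rw [Finset.sum_congr rfl (fun p _ => ?_), Finset.sum_const, smul_eq_mul, mul_comm]
    rw [Finset.card_insert_of_notMem (by simp only [Finset.mem_singleton, Prod.ext_iff]; omega), Finset.card_singleton]
  · rintro ⟨a, b⟩ _ ⟨c, d⟩ _ hne
    simp only [Finset.disjoint_left, Finset.mem_insert, Finset.mem_singleton]
    rintro ⟨u, v⟩ h1 h2
    apply hne
    simp only [Prod.ext_iff] at h1 h2 ⊢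
    omega

lemma sqAdj_iff {a b : ℤ × ℤ} :
    SqAdj a b ↔ (b.1 - a.1 = 1 ∧ b.2 = a.2) ∨ (b.1 - a.1 = -1 ∧ b.2 = a.2) ∨
      (b.1 = a.1 ∧ b.2 - a.2 = 1) ∨ (b.1 = a.1 ∧ b.2 - a.2 = -1) := by
  simp only [SqAdj, Set.mem_insert_iff, Set.mem_singleton_iff, Prod.ext_iff, Prod.fst_sub,
    Prod.snd_sub]
  constructor <;> intro h <;> omega

lemma hexAdj_iff {a b : ℤ × ℤ} :
    HexAdj a b ↔ (b.1 - a.1 = 1 ∧ b.2 = a.2) ∨ (b.1 - a.1 = -1 ∧ b.2 = a.2) ∨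
      (b.1 = a.1 ∧ b.2 - a.2 = 1) ∨ (b.1 = a.1 ∧ b.2 - a.2 = -1) ∨
      (b.1 - a.1 = 1 ∧ b.2 - a.2 = -1) ∨ (b.1 - a.1 = -1 ∧ b.2 - a.2 = 1) := by
  simp only [HexAdj, Set.mem_insert_iff, Set.mem_singleton_iff, Prod.ext_iff, Prod.fst_sub,
    Prod.snd_sub]
  constructor <;> intro h <;> omega

lemma rtg_lift {α β : Type*} {r : α → α → Prop} {s : β → β → Prop} (f : α → β)
    (h : ∀ a b, r a b → Relation.ReflTransGen s (f a) (f b)) {a b : α}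
    (hab : Relation.ReflTransGen r a b) : Relation.ReflTransGen s (f a) (f b) := by
  induction hab with
  | refl => exact .refl
  | tail _ hbc ih => exact ih.trans (h _ _ hbc)

lemma hexToSq_injective {S T : Finset (ℤ × ℤ)} (h : hexToSq S = hexToSq T) : S = T := by
  ext ⟨x, k⟩
  have key : ∀ U : Finset (ℤ × ℤ), (x, k) ∈ U ↔ (x, x + 2*k) ∈ hexToSq U := by
    intro U
    rw [mem_hexToSq]
    constructor
    · exact fun hk => ⟨k, hk, Or.inl rfl⟩
    · rintro ⟨j, hj, hcase⟩
      have : j = k := by omega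
      rwa [this] at hj
  rw [key S, key T, h]

lemma translateSet_comp (v w : ℤ × ℤ) (S : Finset (ℤ × ℤ)) :
    translateSet w (translateSet v S) = translateSet (v + w) S := by
  simp only [translateSet, Finset.image_image]
  apply Finset.image_congr
  intro p _
  simp [add_assoc]

lemma translateSet_zero (S : Finset (ℤ × ℤ)) : translateSet 0 S = S := by
  simp [translateSet]

lemma mem_translate {v : ℤ × ℤ} {S : Finset (ℤ × ℤ)} {p : ℤ × ℤ} :
    p ∈ translateSet v S ↔ p - v ∈ S := by
  simp only [translateSet, Finset.mem_image]
  constructor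
  · rintro ⟨q, hq, rfl⟩; simpa using hq
  · intro h; exact ⟨p - v, h, by simp⟩

lemma hexToSq_translate (a c : ℤ) (S : Finset (ℤ × ℤ)) :
    hexToSq (translateSet (a, c) S) = translateSet (a, a + 2*c) (hexToSq S) := by
  ext ⟨x, y⟩
  rw [mem_hexToSq, mem_translate]
  simp only [Prod.mk_sub_mk, mem_hexToSq, mem_translate, Prod.mk_sub_mk]
  constructor
  · rintro ⟨k, hk, hc⟩
    exact ⟨k - c, by simpa using hk, by omega⟩
  · rintro ⟨k, hk, hc⟩
    exact ⟨k + c, by simpa [Prod.ext_iff, sub_eq_iff_eq_add] using hk, by omega⟩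

lemma sqAdj_mk {x y x' y' : ℤ}
    (h : (x' - x = 1 ∧ y' = y) ∨ (x' - x = -1 ∧ y' = y) ∨ (x' = x ∧ y' - y = 1) ∨
      (x' = x ∧ y' - y = -1)) : SqAdj (x, y) (x', y') := by
  rw [sqAdj_iff]; exact h

lemma hexAdj_mk {x y x' y' : ℤ}
    (h : (x' - x = 1 ∧ y' = y) ∨ (x' - x = -1 ∧ y' = y) ∨ (x' = x ∧ y' - y = 1) ∨
      (x' = x ∧ y' - y = -1) ∨ (x' - x = 1 ∧ y' - y = -1) ∨ (x' - x = -1 ∧ y' - y = 1)) :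
    HexAdj (x, y) (x', y') := by
  rw [hexAdj_iff]; exact h

lemma mem_hexToSq_of {S : Finset (ℤ × ℤ)} {x k y : ℤ} (h : (x, k) ∈ S)
    (hy : y = x + 2*k ∨ y = x + 2*k + 1) : (x, y) ∈ hexToSq S :=
  mem_hexToSq.2 ⟨k, h, hy⟩

lemma hexToSq_hexstep {S : Finset (ℤ × ℤ)} {p q : ℤ × ℤ} (hp : p ∈ S) (hq : q ∈ S)
    (hadj : HexAdj p q) :
    Relation.ReflTransGen (fun u v => u ∈ hexToSq S ∧ v ∈ hexToSq S ∧ SqAdj u v)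
      (p.1, p.1 + 2*p.2) (q.1, q.1 + 2*q.2) := by
  obtain ⟨x, y⟩ := p
  obtain ⟨qx, qy⟩ := q
  simp only at *
  rw [hexAdj_iff] at hadj
  simp only at hadj
  rcases hadj with ⟨h1, h2⟩ | ⟨h1, h2⟩ | ⟨h1, h2⟩ | ⟨h1, h2⟩ | ⟨h1, h2⟩ | ⟨h1, h2⟩
  · -- qx = x+1, qy = y : lo p → hi p → lo q
    refine Relation.ReflTransGen.head
      ⟨mem_hexToSq_of hp (Or.inl rfl), mem_hexToSq_of hp (Or.inr rfl), sqAdj_mk (by omega)⟩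
      (Relation.ReflTransGen.single
        ⟨mem_hexToSq_of hp (Or.inr rfl), mem_hexToSq_of hq (Or.inl rfl), sqAdj_mk (by omega)⟩)
  · -- qx = x-1 : lo p → hi q → lo q
    refine Relation.ReflTransGen.head
      ⟨mem_hexToSq_of hp (Or.inl rfl), mem_hexToSq_of hq (Or.inr rfl), sqAdj_mk (by omega)⟩
      (Relation.ReflTransGen.single
        ⟨mem_hexToSq_of hq (Or.inr rfl), mem_hexToSq_of hq (Or.inl rfl), sqAdj_mk (by omega)⟩)
  · -- qy = y+1 : lo p → hi p → lo q
    refine Relation.ReflTransGen.head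
      ⟨mem_hexToSq_of hp (Or.inl rfl), mem_hexToSq_of hp (Or.inr rfl), sqAdj_mk (by omega)⟩
      (Relation.ReflTransGen.single
        ⟨mem_hexToSq_of hp (Or.inr rfl), mem_hexToSq_of hq (Or.inl rfl), sqAdj_mk (by omega)⟩)
  · -- qy = y-1 : lo p → hi q → lo q
    refine Relation.ReflTransGen.head
      ⟨mem_hexToSq_of hp (Or.inl rfl), mem_hexToSq_of hq (Or.inr rfl), sqAdj_mk (by omega)⟩
      (Relation.ReflTransGen.single
        ⟨mem_hexToSq_of hq (Or.inr rfl), mem_hexToSq_of hq (Or.inl rfl), sqAdj_mk (by omega)⟩)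
  · -- (1,-1) : lo p → hi q → lo q
    refine Relation.ReflTransGen.head
      ⟨mem_hexToSq_of hp (Or.inl rfl), mem_hexToSq_of hq (Or.inr rfl), sqAdj_mk (by omega)⟩
      (Relation.ReflTransGen.single
        ⟨mem_hexToSq_of hq (Or.inr rfl), mem_hexToSq_of hq (Or.inl rfl), sqAdj_mk (by omega)⟩)
  · -- (-1,1) : lo p → hi p → lo q
    refine Relation.ReflTransGen.head
      ⟨mem_hexToSq_of hp (Or.inl rfl), mem_hexToSq_of hp (Or.inr rfl), sqAdj_mk (by omega)⟩
      (Relation.ReflTransGen.single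
        ⟨mem_hexToSq_of hp (Or.inr rfl), mem_hexToSq_of hq (Or.inl rfl), sqAdj_mk (by omega)⟩)

lemma part1 {n : ℕ} {S : Finset (ℤ × ℤ)} (hS : IsHexAnimal n S) :
    IsParityPoly (hexToSq S) ∧ (hexToSq S).card = 2 * n := by
  obtain ⟨hcard, ⟨p0, hp0⟩, hconn⟩ := hS
  refine ⟨⟨⟨⟨(p0.1, p0.1 + 2*p0.2), mem_hexToSq_of hp0 (Or.inl rfl)⟩, ?_⟩, ?_⟩,
    by rw [card_hexToSq, hcard]⟩
  · -- connectivity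
    rintro ⟨ax, ay⟩ ha ⟨bx, by'⟩ hb
    obtain ⟨ka, hka, hya⟩ := mem_hexToSq.1 ha
    obtain ⟨kb, hkb, hyb⟩ := mem_hexToSq.1 hb
    have mid : Relation.ReflTransGen
        (fun u v => u ∈ hexToSq S ∧ v ∈ hexToSq S ∧ SqAdj u v)
        (ax, ax + 2*ka) (bx, bx + 2*kb) := by
      refine rtg_lift (fun r => (r.1, r.1 + 2*r.2)) ?_ (hconn _ hka _ hkb)
      rintro u v ⟨hu, hv, hadj⟩
      exact hexToSq_hexstep hu hv hadj
    have first : Relation.ReflTransGen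
        (fun u v => u ∈ hexToSq S ∧ v ∈ hexToSq S ∧ SqAdj u v)
        (ax, ay) (ax, ax + 2*ka) := by
      rcases hya with h | h
      · rw [h]
      · exact Relation.ReflTransGen.single
          ⟨ha, mem_hexToSq_of hka (Or.inl rfl), sqAdj_mk (by omega)⟩
    have last : Relation.ReflTransGen
        (fun u v => u ∈ hexToSq S ∧ v ∈ hexToSq S ∧ SqAdj u v)
        (bx, bx + 2*kb) (bx, by') := by
      rcases hyb with h | h
      · rw [h]
      · exact Relation.ReflTransGen.single
          ⟨mem_hexToSq_of hkb (Or.inl rfl), hb, sqAdj_mk (by omega)⟩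
    exact (first.trans mid).trans last
  · -- parity
    refine ⟨id, ?_, ?_⟩
    · intro x y hxy
      obtain ⟨k, hk, hc⟩ := mem_hexToSq.1 hxy
      constructor
      · intro he
        have hy : y = x + 2*k := by
          rcases hc with h | h
          · exact h
          · simp only [id_eq] at he; omega
        exact mem_hexToSq_of hk (Or.inr (by omega))
      · intro hne
        have hy : y = x + 2*k + 1 := by
          rcases hc with h | h
          · exact absurd (by simp only [id_eq]; omega) hne
          · exact h
        exact mem_hexToSq_of hk (Or.inl (by omega))
    · intro x _ _
      simp only [id_eq]
      omega

lemma part2 {n : ℕ} {S T : Finset (ℤ × ℤ)} (hS : IsHexAnimal n S)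
    (h : TransEquiv (hexToSq S) (hexToSq T)) : TransEquiv S T := by
  obtain ⟨⟨a, b⟩, hv⟩ := h
  have heven : (b - a) % 2 = 0 := by
    by_contra hodd
    obtain ⟨_, ⟨⟨x0, y0⟩, hx0⟩, _⟩ := hS
    have hYne : (Finset.image Prod.snd (S.filter (fun p => p.1 = x0))).Nonempty :=
      ⟨y0, Finset.mem_image.2 ⟨(x0, y0), Finset.mem_filter.2 ⟨hx0, rfl⟩, rfl⟩⟩
    set m := (Finset.image Prod.snd (S.filter (fun p => p.1 = x0))).min' hYne with hm
    have hmS : (x0, m) ∈ S := by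
      have hmem := Finset.min'_mem _ hYne
      rw [← hm] at hmem
      obtain ⟨⟨u, v⟩, huv, hv2⟩ := Finset.mem_image.1 hmem
      obtain ⟨h1, h2⟩ := Finset.mem_filter.1 huv
      simp only at h2 hv2
      subst h2; subst hv2; exact h1
    have hmem : (x0 + a, x0 + 2*m + b) ∈ hexToSq T := by
      rw [← hv, mem_translate]
      have heq : ((x0 + a, x0 + 2*m + b) : ℤ × ℤ) - (a, b) = (x0, x0 + 2*m) := by
        simp only [Prod.mk_sub_mk, Prod.mk.injEq]; omega
      rw [heq]
      exact mem_hexToSq_of hmS (Or.inl rfl)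
    obtain ⟨k, hk, hc⟩ := mem_hexToSq.1 hmem
    rcases hc with hcl | hcr
    · omega
    · have h2 : (x0 + a, x0 + a + 2*k) ∈ hexToSq T := mem_hexToSq_of hk (Or.inl rfl)
      rw [← hv, mem_translate] at h2
      have heq : ((x0 + a, x0 + a + 2*k) : ℤ × ℤ) - (a, b) = (x0, x0 + 2*m - 1) := by
        simp only [Prod.mk_sub_mk, Prod.mk.injEq]; omega
      rw [heq] at h2
      obtain ⟨j, hj, hcj⟩ := mem_hexToSq.1 h2
      rcases hcj with h3 | h3
      · omega
      · have hjY : j ∈ Finset.image Prod.snd (S.filter (fun p => p.1 = x0)) :=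
          Finset.mem_image.2 ⟨(x0, j), Finset.mem_filter.2 ⟨hj, rfl⟩, rfl⟩
        have := Finset.min'_le _ j hjY
        omega
  obtain ⟨e, he⟩ : ∃ e, b = a + 2*e := ⟨(b - a)/2, by omega⟩
  refine ⟨(a, e), hexToSq_injective ?_⟩
  rw [hexToSq_translate, ← he, hv]

def projHex (p : ℤ × ℤ) : ℤ × ℤ := (p.1, (p.2 - p.1 - (p.2 - p.1) % 2)/2)

lemma part3 {n : ℕ} {T : Finset (ℤ × ℤ)} (hT : IsParityPoly T) (hcard : T.card = 2 * n) :
    ∃ S : Finset (ℤ × ℤ), IsHexAnimal n S ∧ TransEquiv (hexToSq S) T := by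
  obtain ⟨⟨⟨p0, hp0⟩, hconn⟩, ε, hpar, hadjT⟩ := hT
  set x0 := p0.1 with hx0
  -- parity invariant along connected component
  have key : ∀ q, Relation.ReflTransGen (fun p q => p ∈ T ∧ q ∈ T ∧ SqAdj p q) p0 q →
      (ε q.1 - ε x0 - (q.1 - x0)) % 2 = 0 := by
    intro q hpath
    induction hpath with
    | refl => simp [hx0]
    | @tail b c _ hbc ih =>
        obtain ⟨hb, hc, hadj'⟩ := hbc
        rw [sqAdj_iff] at hadj'
        rcases hadj' with ⟨h1, h2⟩ | ⟨h1, h2⟩ | ⟨h1, h2⟩ | ⟨h1, h2⟩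
        · have hne := hadjT b.1 ⟨b.2, hb⟩ ⟨c.2, by
            have : c = (b.1 + 1, c.2) := by rw [Prod.ext_iff]; constructor <;> simp <;> omega
            rwa [this] at hc⟩
          have hc1 : c.1 = b.1 + 1 := by omega
          rw [hc1]; omega
        · have hne := hadjT c.1 ⟨c.2, hc⟩ ⟨b.2, by
            have : b = (c.1 + 1, b.2) := by rw [Prod.ext_iff]; constructor <;> simp <;> omega
            rwa [this] at hb⟩
          have hb1 : b.1 = c.1 + 1 := by omega
          rw [hb1] at ih; omega
        · rw [h1]; omega
        · rw [h1]; omega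
  have hinv : ∀ x y : ℤ, (x, y) ∈ T → (ε x - ε x0 - (x - x0)) % 2 = 0 := fun x y h =>
    key (x, y) (hconn p0 hp0 _ h)
  set b0 := x0 - ε x0 with hb0
  set T' := translateSet (0, b0) T with hT'
  have memT' : ∀ x y : ℤ, (x, y) ∈ T' ↔ (x, y - b0) ∈ T := by
    intro x y
    rw [hT', mem_translate]
    simp only [Prod.mk_sub_mk, sub_zero]
  have hP : ∀ x y : ℤ, (x, y) ∈ T' →
      ((y - x) % 2 = 0 → (x, y + 1) ∈ T') ∧ ((y - x) % 2 ≠ 0 → (x, y - 1) ∈ T') := by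
    intro x y hxy
    rw [memT'] at hxy
    have hinv' := hinv x (y - b0) hxy
    have hp := hpar x (y - b0) hxy
    constructor
    · intro he
      have h1 : (y - b0 - ε x) % 2 = 0 := by omega
      have h2 := hp.1 h1
      rw [memT', show y + 1 - b0 = y - b0 + 1 from by omega]
      exact h2
    · intro hne
      have h1 : (y - b0 - ε x) % 2 ≠ 0 := by omega
      have h2 := hp.2 h1
      rw [memT', show y - 1 - b0 = y - b0 - 1 from by omega]
      exact h2
  set S : Finset (ℤ × ℤ) :=
    (T'.filter (fun p => (p.2 - p.1) % 2 = 0)).image (fun p => (p.1, (p.2 - p.1)/2)) with hSdef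
  have memS : ∀ x k : ℤ, (x, k) ∈ S ↔ (x, x + 2*k) ∈ T' := by
    intro x k
    simp only [hSdef, Finset.mem_image, Finset.mem_filter]
    constructor
    · rintro ⟨⟨u, v⟩, ⟨huv, hp2⟩, heq⟩
      simp only [Prod.mk.injEq] at heq
      simp only at hp2
      rwa [show ((u, v) : ℤ × ℤ) = (x, x + 2*k) from by
        rw [Prod.mk.injEq]; constructor <;> omega] at huv
    · intro h
      refine ⟨(x, x + 2*k), ⟨h, ?_⟩, ?_⟩
      · show (x + 2*k - x) % 2 = 0; omega
      · show ((x, (x + 2*k - x)/2) : ℤ × ℤ) = (x, k)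
        rw [Prod.mk.injEq]; constructor <;> omega
  have hST : hexToSq S = T' := by
    ext ⟨x, y⟩
    rw [mem_hexToSq]
    constructor
    · rintro ⟨k, hk, hc⟩
      rw [memS] at hk
      rcases hc with rfl | rfl
      · exact hk
      · exact (hP x (x + 2*k) hk).1 (by omega)
    · intro h
      by_cases hp2 : (y - x) % 2 = 0
      · exact ⟨(y - x)/2, (memS _ _).2 (by rwa [show x + 2*((y - x)/2) = y from by omega]),
          Or.inl (by omega)⟩
      · have h2 := (hP x y h).2 hp2
        refine ⟨(y - 1 - x)/2, (memS _ _).2 ?_, Or.inr (by omega)⟩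
        rwa [show x + 2*((y - 1 - x)/2) = y - 1 from by omega]
  have hcardT' : T'.card = 2 * n := by
    rw [hT', translateSet, Finset.card_image_of_injective _ (add_left_injective _), hcard]
  have hcardS : S.card = n := by
    have := card_hexToSq S
    rw [hST, hcardT'] at this
    omega
  have hSne : S.Nonempty := by
    refine Finset.card_pos.mp ?_
    have : 0 < T.card := Finset.card_pos.mpr ⟨p0, hp0⟩
    omega
  -- connectivity of S
  have hproj : ∀ p ∈ T', projHex p ∈ S := by
    rintro ⟨x, y⟩ hp
    show (x, (y - x - (y - x) % 2)/2) ∈ S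
    rw [memS]
    by_cases hp2 : (y - x) % 2 = 0
    · rwa [show x + 2*((y - x - (y - x) % 2)/2) = y from by omega]
    · rw [show x + 2*((y - x - (y - x) % 2)/2) = y - 1 from by omega]
      exact (hP x y hp).2 hp2
  have hconn' : ∀ p ∈ T', ∀ q ∈ T',
      Relation.ReflTransGen (fun u v => u ∈ T' ∧ v ∈ T' ∧ SqAdj u v) p q := by
    intro p hp q hq
    rw [hT', mem_translate] at hp hq
    have hpath := hconn _ hp _ hq
    have hstep0 : ∀ u v : ℤ × ℤ, (u ∈ T ∧ v ∈ T ∧ SqAdj u v) →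
        Relation.ReflTransGen (fun u v => u ∈ T' ∧ v ∈ T' ∧ SqAdj u v)
          (u + (0, b0)) (v + (0, b0)) := by
      rintro u v ⟨hu, hv, ha⟩
      refine Relation.ReflTransGen.single ⟨?_, ?_, ?_⟩
      · rw [hT', mem_translate]; simpa using hu
      · rw [hT', mem_translate]; simpa using hv
      · simpa only [SqAdj, add_sub_add_right_eq_sub] using ha
    have hlift := rtg_lift _ hstep0 hpath
    simpa using hlift
  have hstep : ∀ p q, p ∈ T' → q ∈ T' → SqAdj p q →
      Relation.ReflTransGen (fun u v => u ∈ S ∧ v ∈ S ∧ HexAdj u v)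
        (projHex p) (projHex q) := by
    rintro ⟨x, y⟩ ⟨qx, qy⟩ hp hq hadj'
    have hpS := hproj _ hp
    have hqS := hproj _ hq
    rw [sqAdj_iff] at hadj'
    simp only at hadj'
    show Relation.ReflTransGen _ (x, (y - x - (y - x) % 2)/2) (qx, (qy - qx - (qy - qx) % 2)/2)
    rcases hadj' with ⟨h1, h2⟩ | ⟨h1, h2⟩ | ⟨h1, h2⟩ | ⟨h1, h2⟩ <;> by_cases hp2 : (y - x) % 2 = 0 <;>
      first
        | exact Relation.ReflTransGen.single ⟨hpS, hqS, hexAdj_mk (by omega)⟩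
        | (rw [show ((qx, (qy - qx - (qy - qx) % 2)/2) : ℤ × ℤ)
              = ((x, (y - x - (y - x) % 2)/2) : ℤ × ℤ) from by
              rw [Prod.mk.injEq]; constructor <;> omega]
           try exact Relation.ReflTransGen.refl)
  have hconnS : ∀ a ∈ S, ∀ b ∈ S,
      Relation.ReflTransGen (fun u v => u ∈ S ∧ v ∈ S ∧ HexAdj u v) a b := by
    rintro ⟨ax, ak⟩ ha ⟨bx, bk⟩ hb
    have hpa : (ax, ax + 2*ak) ∈ T' := (memS _ _).1 ha
    have hpb : (bx, bx + 2*bk) ∈ T' := (memS _ _).1 hb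
    have hpath := hconn' _ hpa _ hpb
    have hlift := rtg_lift projHex (fun u v h => hstep u v h.1 h.2.1 h.2.2) hpath
    have e1 : projHex (ax, ax + 2*ak) = (ax, ak) := by
      show ((ax, (ax + 2*ak - ax - (ax + 2*ak - ax) % 2)/2) : ℤ × ℤ) = (ax, ak)
      rw [Prod.mk.injEq]; constructor <;> omega
    have e2 : projHex (bx, bx + 2*bk) = (bx, bk) := by
      show ((bx, (bx + 2*bk - bx - (bx + 2*bk - bx) % 2)/2) : ℤ × ℤ) = (bx, bk)
      rw [Prod.mk.injEq]; constructor <;> omega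
    rwa [e1, e2] at hlift
  refine ⟨S, ⟨hcardS, hSne, hconnS⟩, ⟨(0, -b0), ?_⟩⟩
  rw [hST, hT', translateSet_comp,
    show ((0, b0) + (0, -b0) : ℤ × ℤ) = 0 from by simp, translateSet_zero]

/-- The doubling map `hexToSq`, sending each hexagonal cell to the pair of square cells
whose diagonally opposite corners lie in that hexagon, defines a bijection (up to
translation) between hexagonal lattice animals with `n` cells and parity polyominoes
with `2n` square cells. -/
theorem hexToSq_bijection (n : ℕ) :
    (∀ S : Finset (ℤ × ℤ), IsHexAnimal n S →
        IsParityPoly (hexToSq S) ∧ (hexToSq S).card = 2 * n) ∧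
    (∀ S T : Finset (ℤ × ℤ), IsHexAnimal n S → IsHexAnimal n T →
        TransEquiv (hexToSq S) (hexToSq T) → TransEquiv S T) ∧
    (∀ T : Finset (ℤ × ℤ), IsParityPoly T → T.card = 2 * n →
        ∃ S : Finset (ℤ × ℤ), IsHexAnimal n S ∧ TransEquiv (hexToSq S) T) :=
  ⟨fun _ hS => part1 hS, fun _ _ hS _ h => part2 hS h, fun _ hT hc => part3 hT hc⟩
end

section
/- The sequence a_n counting hexanimals embeddable in a strip of height 4 satisfies the linear recurrence a_n = 2a_{n-1} - a_{n-3} for n \u2265 4, with a_1 = 1, a_2 = 3, a_3 = 6. -/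
/-- A hexagonal animal fits (after translation) in the square-lattice strip `0 ≤ y < k`,
via the domino embedding. -/
def FitsStrip (k : ℕ) (S : Finset (ℤ × ℤ)) : Prop :=
  ∃ v : ℤ × ℤ, ∀ p ∈ hexToSq (translateSet v S), 0 ≤ p.2 ∧ p.2 < (k : ℤ)

/-- The number of hexagonal lattice animals with `n` cells, up to translation, that are
embeddable in a square-lattice strip of height `k`. -/
noncomputable def stripCount (k n : ℕ) : ℕ :=
  Nat.card (Quot (fun S T : {S : Finset (ℤ × ℤ) // IsHexAnimal n S ∧ FitsStrip k S} =>
    TransEquiv S.1 T.1))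

namespace StripAux

/-- diagonal coordinate -/
def tv (p : ℤ × ℤ) : ℤ := p.1 + 2 * p.2

lemma tv_add (p v : ℤ × ℤ) : tv (p + v) = tv p + tv v := by
  simp [tv, Prod.fst_add, Prod.snd_add]; ring

lemma mem_translate {v : ℤ × ℤ} {S : Finset (ℤ × ℤ)} {p : ℤ × ℤ} :
    p ∈ translateSet v S ↔ ∃ q ∈ S, q + v = p := by
  simp only [translateSet, Finset.mem_image]

lemma card_translate (v : ℤ × ℤ) (S : Finset (ℤ × ℤ)) :
    (translateSet v S).card = S.card :=
  Finset.card_image_of_injective _ (add_left_injective v)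

lemma translate_zero (S : Finset (ℤ × ℤ)) : translateSet 0 S = S := by
  simp [translateSet]

lemma translate_translate (v w : ℤ × ℤ) (S : Finset (ℤ × ℤ)) :
    translateSet w (translateSet v S) = translateSet (v + w) S := by
  rw [translateSet, translateSet, translateSet, Finset.image_image]
  congr 1; funext q; exact add_assoc q v w

lemma transEquiv_refl (S : Finset (ℤ × ℤ)) : TransEquiv S S := ⟨0, translate_zero S⟩

lemma transEquiv_symm {S T : Finset (ℤ × ℤ)} (h : TransEquiv S T) : TransEquiv T S := by
  obtain ⟨v, rfl⟩ := h
  exact ⟨-v, by rw [translate_translate, add_neg_cancel, translate_zero]⟩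

lemma transEquiv_trans {S T U : Finset (ℤ × ℤ)} (h : TransEquiv S T) (h' : TransEquiv T U) :
    TransEquiv S U := by
  obtain ⟨v, rfl⟩ := h; obtain ⟨w, rfl⟩ := h'
  exact ⟨v + w, (translate_translate v w S).symm⟩

lemma hexAdj_iff {a b : ℤ × ℤ} : HexAdj a b ↔
    (b.1 - a.1 = 1 ∧ b.2 - a.2 = 0) ∨ (b.1 - a.1 = -1 ∧ b.2 - a.2 = 0) ∨
    (b.1 - a.1 = 0 ∧ b.2 - a.2 = 1) ∨ (b.1 - a.1 = 0 ∧ b.2 - a.2 = -1) ∨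
    (b.1 - a.1 = 1 ∧ b.2 - a.2 = -1) ∨ (b.1 - a.1 = -1 ∧ b.2 - a.2 = 1) := by
  simp [HexAdj, Set.mem_insert_iff, Set.mem_singleton_iff, Prod.ext_iff, Prod.fst_sub,
    Prod.snd_sub]

lemma hexAdj_symm {a b : ℤ × ℤ} (h : HexAdj a b) : HexAdj b a := by
  rw [hexAdj_iff] at h ⊢; omega

lemma hexAdj_dx {a b : ℤ × ℤ} (h : HexAdj a b) : b.1 - a.1 ≤ 1 ∧ a.1 - b.1 ≤ 1 := by
  rw [hexAdj_iff] at h; omega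

/-- diagonal steps -/
lemma hexAdj_step {a b : ℤ × ℤ} (hx : b.1 = a.1 + 1 ∨ b.1 = a.1 - 1)
    (ht : tv b = tv a + 1 ∨ tv b = tv a - 1) : HexAdj a b := by
  simp only [tv] at ht; rw [hexAdj_iff]; omega

/-- vertical steps -/
lemma hexAdj_vert {a b : ℤ × ℤ} (hx : b.1 = a.1)
    (ht : tv b = tv a + 2 ∨ tv b = tv a - 2) : HexAdj a b := by
  simp only [tv] at ht; rw [hexAdj_iff]; omega

section Connectivity

variable {S : Finset (ℤ × ℤ)}

/-- L1: along a connectivity path, every intermediate column is occupied. -/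
lemma col_of_path {a b : ℤ × ℤ}
    (h : Relation.ReflTransGen (fun p q => p ∈ S ∧ q ∈ S ∧ HexAdj p q) a b)
    (ha : a ∈ S) : ∀ x : ℤ, a.1 ≤ x → x ≤ b.1 → ∃ q ∈ S, q.1 = x := by
  induction h with
  | refl => intro x h1 h2; exact ⟨a, ha, by omega⟩
  | @tail c b hac hcb ih =>
    intro x h1 h2
    obtain ⟨_, hbS, hadj⟩ := hcb
    have hd := hexAdj_dx hadj
    by_cases hx : x ≤ c.1
    · exact ih x h1 hx
    · exact ⟨b, hbS, by omega⟩

/-- predecessor-closure implies the interval property -/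
lemma interval_of_pred (h0 : ∀ p ∈ S, 0 ≤ p.1)
    (hp : ∀ p ∈ S, p.1 = 0 ∨ ∃ q ∈ S, q.1 = p.1 - 1) :
    ∀ p ∈ S, ∀ x : ℤ, 0 ≤ x → x ≤ p.1 → ∃ q ∈ S, q.1 = x := by
  have key : ∀ k : ℕ, ∀ p ∈ S, ∀ x : ℤ, x = p.1 - k → 0 ≤ x → ∃ q ∈ S, q.1 = x := by
    intro k
    induction k with
    | zero => intro p hp' x hx _; exact ⟨p, hp', by omega⟩
    | succ k ih =>
      intro p hpS x hx hx0
      obtain ⟨q, hqS, hq⟩ := ih p hpS (p.1 - k) rfl (by omega)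
      rcases hp q hqS with h | ⟨r, hrS, hr⟩
      · omega
      · exact ⟨r, hrS, by omega⟩
  intro p hpS x hx0 hxp
  exact key (p.1 - x).toNat p hpS x (by omega) hx0

/-- L2: interval property + span ≤ 2 implies connectivity. -/
lemma connected_of_interval
    (hspan : ∀ p ∈ S, ∀ q ∈ S, tv p - tv q ≤ 2)
    (hint : ∀ p ∈ S, ∀ q ∈ S, ∀ x : ℤ, p.1 ≤ x → x ≤ q.1 → ∃ c ∈ S, c.1 = x) :
    ∀ a ∈ S, ∀ b ∈ S,
      Relation.ReflTransGen (fun p q => p ∈ S ∧ q ∈ S ∧ HexAdj p q) a b := by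
  set r := fun p q => p ∈ S ∧ q ∈ S ∧ HexAdj p q with hr
  have hsym : Symmetric r := fun p q ⟨h1, h2, h3⟩ => ⟨h2, h1, hexAdj_symm h3⟩
  -- same column
  have same : ∀ a ∈ S, ∀ b ∈ S, b.1 = a.1 → Relation.ReflTransGen r a b := by
    intro a ha b hb hx
    have h1 := hspan a ha b hb
    have h2 := hspan b hb a ha
    have htv : tv b = tv a ∨ tv b = tv a + 2 ∨ tv b = tv a - 2 := by
      simp only [tv] at h1 h2 ⊢; omega
    rcases htv with h | h | h
    · have : a = b := by
        have : a.2 = b.2 := by simp only [tv] at h; omega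
        exact Prod.ext hx.symm this
      exact this ▸ Relation.ReflTransGen.refl
    · exact Relation.ReflTransGen.single ⟨ha, hb, hexAdj_vert hx (Or.inl h)⟩
    · exact Relation.ReflTransGen.single ⟨ha, hb, hexAdj_vert hx (Or.inr h)⟩
  have aux : ∀ k : ℕ, ∀ a ∈ S, ∀ b ∈ S, b.1 = a.1 + k → Relation.ReflTransGen r a b := by
    intro k
    induction k with
    | zero => intro a ha b hb h; exact same a ha b hb (by omega)
    | succ k ih =>
      intro a ha b hb h
      obtain ⟨c, hcS, hc⟩ := hint a ha b hb (a.1 + 1) (by omega) (by omega)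
      have h1 := hspan a ha c hcS
      have h2 := hspan c hcS a ha
      -- tv c - tv a is odd and within [-2,2], hence ±1
      have hpar : tv c = tv a + 1 ∨ tv c = tv a - 1 := by
        simp only [tv] at h1 h2 ⊢; omega
      have step : r a c := ⟨ha, hcS, hexAdj_step (Or.inl (by omega)) hpar⟩
      exact Relation.ReflTransGen.head step (ih c hcS b hb (by omega))
  intro a ha b hb
  rcases le_or_gt a.1 b.1 with h | h
  · exact aux (b.1 - a.1).toNat a ha b hb (by omega)
  · haveI : Std.Symm r := ⟨fun _ _ h => hsym h⟩
    exact Std.Symm.symm (r := Relation.ReflTransGen r) _ _ (aux (a.1 - b.1).toNat b hb a ha (by omega))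

end Connectivity

lemma mem_hexToSq {S : Finset (ℤ × ℤ)} {z : ℤ × ℤ} :
    z ∈ hexToSq S ↔ ∃ q ∈ S, z = (q.1, tv q) ∨ z = (q.1, tv q + 1) := by
  simp only [hexToSq, Finset.mem_biUnion, Finset.mem_insert, Finset.mem_singleton, tv]

/-- characterization of FitsStrip 4 -/
lemma fits_iff {S : Finset (ℤ × ℤ)} :
    FitsStrip 4 S ↔ ∃ c : ℤ, ∀ p ∈ S, 0 ≤ tv p + c ∧ tv p + c ≤ 2 := by
  constructor
  · rintro ⟨v, hv⟩
    refine ⟨tv v, fun p hp => ?_⟩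
    have hq : p + v ∈ translateSet v S := mem_translate.2 ⟨p, hp, rfl⟩
    have h1 := hv ((p+v).1, tv (p+v)) (mem_hexToSq.2 ⟨p + v, hq, Or.inl rfl⟩)
    have h2 := hv ((p+v).1, tv (p+v) + 1) (mem_hexToSq.2 ⟨p + v, hq, Or.inr rfl⟩)
    simp only at h1 h2
    rw [tv_add] at h1 h2
    refine ⟨h1.1, ?_⟩
    have := h2.2
    push_cast at this
    omega
  · rintro ⟨c, hc⟩
    refine ⟨(c, 0), fun p hp => ?_⟩
    obtain ⟨q, hqmem, hq⟩ := mem_hexToSq.1 hp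
    obtain ⟨s, hsS, hs⟩ := mem_translate.1 hqmem
    have hcs := hc s hsS
    have htq : tv q = tv s + c := by
      rw [← hs, tv_add]; simp [tv]
    rcases hq with rfl | rfl <;> simp only <;> push_cast <;> omega

end StripAux

namespace StripAux

def Canon (n : ℕ) (S : Finset (ℤ × ℤ)) : Prop :=
  S.card = n ∧ (∃ p ∈ S, p.1 = 0) ∧ (∀ p ∈ S, 0 ≤ p.1) ∧
  (∀ p ∈ S, 0 ≤ tv p) ∧ (∀ p ∈ S, ∀ q ∈ S, tv p - tv q ≤ 2) ∧
  (∃ p ∈ S, tv p ≤ 1) ∧ (∀ p ∈ S, p.1 = 0 ∨ ∃ q ∈ S, q.1 = p.1 - 1)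

instance (n : ℕ) : DecidablePred (Canon n) := fun _ => by unfold Canon; infer_instance

lemma canon_nonempty {n : ℕ} {S : Finset (ℤ × ℤ)} (h : Canon n S) : S.Nonempty := by
  obtain ⟨p, hp, -⟩ := h.2.1; exact ⟨p, hp⟩

lemma canon_tv_le3 {n : ℕ} {S : Finset (ℤ × ℤ)} (h : Canon n S) :
    ∀ p ∈ S, tv p ≤ 3 := by
  intro p hp
  obtain ⟨q, hq, hq1⟩ := h.2.2.2.2.2.1
  have := h.2.2.2.2.1 p hp q hq
  omega

lemma canon_col_lt {n : ℕ} {S : Finset (ℤ × ℤ)} (h : Canon n S) :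
    ∀ p ∈ S, p.1 < n := by
  intro p hp
  have hsub : Finset.Icc (0:ℤ) p.1 ⊆ S.image Prod.fst := by
    intro x hx
    rw [Finset.mem_Icc] at hx
    obtain ⟨q, hq, hq'⟩ := interval_of_pred h.2.2.1 h.2.2.2.2.2.2 p hp x hx.1 hx.2
    exact Finset.mem_image.2 ⟨q, hq, hq'⟩
  have h1 := Finset.card_le_card hsub
  have h2 := Finset.card_image_le (f := Prod.fst) (s := S)
  rw [Int.card_Icc] at h1
  have h0 := h.2.2.1 p hp
  have := h.1
  omega

noncomputable def grid (n : ℕ) : Finset (ℤ × ℤ) :=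
  (Finset.Icc (0:ℤ) (n-1) ×ˢ Finset.Icc (-(n:ℤ)) (n:ℤ)).filter (fun p => 0 ≤ tv p ∧ tv p ≤ 3)

lemma mem_grid {n : ℕ} {p : ℤ × ℤ} :
    p ∈ grid n ↔ 0 ≤ p.1 ∧ p.1 ≤ (n:ℤ) - 1 ∧ -(n:ℤ) ≤ p.2 ∧ p.2 ≤ (n:ℤ) ∧
      0 ≤ tv p ∧ tv p ≤ 3 := by
  simp only [grid, Finset.mem_filter, Finset.mem_product, Finset.mem_Icc]
  tauto

lemma grid_of {n : ℕ} {p : ℤ × ℤ} (hx : 0 ≤ p.1) (hxn : p.1 < (n:ℤ))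
    (ht0 : 0 ≤ tv p) (ht3 : tv p ≤ 3) : p ∈ grid n := by
  rw [mem_grid]
  simp only [tv] at ht0 ht3
  refine ⟨hx, by omega, by omega, by omega, ht0, ht3⟩

lemma canon_subset_grid {n : ℕ} {S : Finset (ℤ × ℤ)} (h : Canon n S) : S ⊆ grid n := by
  intro p hp
  exact grid_of (h.2.2.1 p hp) (by exact_mod_cast canon_col_lt h p hp)
    (h.2.2.2.1 p hp) (canon_tv_le3 h p hp)

noncomputable def canonFam (n : ℕ) : Finset (Finset (ℤ × ℤ)) := ((grid n).powerset).filter (Canon n)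

lemma mem_canonFam {n : ℕ} {S : Finset (ℤ × ℤ)} : S ∈ canonFam n ↔ Canon n S :=
  ⟨fun h => (Finset.mem_filter.1 h).2,
   fun h => Finset.mem_filter.2 ⟨Finset.mem_powerset.2 (canon_subset_grid h), h⟩⟩

lemma exists_canon {n : ℕ} {S : Finset (ℤ × ℤ)} (hA : IsHexAnimal n S)
    (hF : FitsStrip 4 S) : ∃ T, Canon n T ∧ TransEquiv S T := by
  obtain ⟨hcard, hne, hconn⟩ := hA
  obtain ⟨c, hc⟩ := fits_iff.1 hF
  obtain ⟨b, hbS, hbmin⟩ := S.exists_min_image Prod.fst hne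
  obtain ⟨m, hmS, hmmin⟩ := S.exists_min_image tv hne
  refine ⟨translateSet (-b.1, -((tv m - b.1)/2)) S, ?_, ⟨_, rfl⟩⟩
  set v : ℤ × ℤ := (-b.1, -((tv m - b.1)/2)) with hv
  have hvt : tv v = -b.1 - 2*((tv m - b.1)/2) := by simp [tv, hv]; ring
  have hd : 0 ≤ tv m + tv v ∧ tv m + tv v ≤ 1 := by
    have h1 := Int.mul_ediv_add_emod (tv m - b.1) 2
    have h2 := Int.emod_nonneg (tv m - b.1) (by norm_num : (2:ℤ) ≠ 0)
    have h3 := Int.emod_lt_of_pos (tv m - b.1) (by norm_num : (0:ℤ) < 2)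
    omega
  refine ⟨by rw [card_translate]; exact hcard, ?_, ?_, ?_, ?_, ?_, ?_⟩
  · exact ⟨b + v, mem_translate.2 ⟨b, hbS, rfl⟩, by simp [hv, Prod.fst_add]⟩
  · rintro p hp
    obtain ⟨q, hq, rfl⟩ := mem_translate.1 hp
    have := hbmin q hq
    simp only [Prod.fst_add, hv]
    omega
  · rintro p hp
    obtain ⟨q, hq, rfl⟩ := mem_translate.1 hp
    rw [tv_add]
    have := hmmin q hq
    omega
  · rintro p hp q hq
    obtain ⟨p', hp', rfl⟩ := mem_translate.1 hp
    obtain ⟨q', hq', rfl⟩ := mem_translate.1 hq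
    rw [tv_add, tv_add]
    have h1 := hc p' hp'
    have h2 := hc q' hq'
    omega
  · exact ⟨m + v, mem_translate.2 ⟨m, hmS, rfl⟩, by rw [tv_add]; omega⟩
  · rintro p hp
    obtain ⟨q, hq, rfl⟩ := mem_translate.1 hp
    simp only [Prod.fst_add, hv]
    by_cases h0 : q.1 + -b.1 = 0
    · exact Or.inl h0
    · refine Or.inr ?_
      have hb1 : b.1 ≤ q.1 := hbmin q hq
      obtain ⟨r, hr, hr'⟩ := col_of_path (hconn b hbS q hq) hbS (q.1 - 1) (by omega) (by omega)
      exact ⟨r + v, mem_translate.2 ⟨r, hr, rfl⟩, by simp only [Prod.fst_add, hv]; omega⟩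

lemma canon_unique {n : ℕ} {S T : Finset (ℤ × ℤ)} {v : ℤ × ℤ}
    (hS : Canon n S) (hT : Canon n T) (h : translateSet v S = T) : S = T := by
  obtain ⟨z, hz, hz0⟩ := hS.2.1
  obtain ⟨w, hw, hw1⟩ := hS.2.2.2.2.2.1
  obtain ⟨z', hz', hz0'⟩ := hT.2.1
  obtain ⟨w', hw', hw1'⟩ := hT.2.2.2.2.2.1
  have hzv : z + v ∈ T := h ▸ mem_translate.2 ⟨z, hz, rfl⟩
  have hwv : w + v ∈ T := h ▸ mem_translate.2 ⟨w, hw, rfl⟩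
  obtain ⟨q, hq, hq'⟩ := mem_translate.1 (h ▸ hz' : z' ∈ translateSet v S)
  obtain ⟨u, hu, hu'⟩ := mem_translate.1 (h ▸ hw' : w' ∈ translateSet v S)
  have h1 : 0 ≤ (z + v).1 := hT.2.2.1 _ hzv
  have h2 : 0 ≤ q.1 := hS.2.2.1 q hq
  have hv1 : v.1 = 0 := by
    have : q.1 + v.1 = 0 := by rw [← hz0']; rw [← hq']; rfl
    simp only [Prod.fst_add] at h1
    omega
  have h3 : 0 ≤ tv (w + v) := hT.2.2.2.1 _ hwv
  have h4 : 0 ≤ tv u := hS.2.2.2.1 u hu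
  have h5 : tv u + tv v ≤ 1 := by
    have : tv (u + v) = tv w' := by rw [hu']
    rw [tv_add] at this
    omega
  have hv2 : v.2 = 0 := by
    rw [tv_add] at h3
    simp only [tv] at h3 h5 hw1 h4
    omega
  have : v = 0 := Prod.ext hv1 hv2
  rw [this, translate_zero] at h
  exact h

lemma canon_isAnimal {n : ℕ} {S : Finset (ℤ × ℤ)} (h : Canon n S) :
    IsHexAnimal n S ∧ FitsStrip 4 S := by
  have hne := canon_nonempty h
  constructor
  · refine ⟨h.1, hne, ?_⟩
    refine connected_of_interval h.2.2.2.2.1 ?_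
    intro p hp q hq x hpx hxq
    exact interval_of_pred h.2.2.1 h.2.2.2.2.2.2 q hq x (le_trans (h.2.2.1 p hp) hpx) hxq
  · rw [fits_iff]
    obtain ⟨m, hmS, hmmin⟩ := S.exists_min_image tv hne
    refine ⟨-tv m, fun p hp => ?_⟩
    have h1 := hmmin p hp
    have h2 := h.2.2.2.2.1 p hp m hmS
    omega

noncomputable def repFun (n : ℕ) :
    {S : Finset (ℤ × ℤ) // IsHexAnimal n S ∧ FitsStrip 4 S} → {T // T ∈ canonFam n} :=
  fun S => ⟨Classical.choose (exists_canon S.2.1 S.2.2),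
    mem_canonFam.2 (Classical.choose_spec (exists_canon S.2.1 S.2.2)).1⟩

lemma repFun_equiv (n : ℕ) (S : {S : Finset (ℤ × ℤ) // IsHexAnimal n S ∧ FitsStrip 4 S}) :
    TransEquiv S.1 (repFun n S).1 :=
  (Classical.choose_spec (exists_canon S.2.1 S.2.2)).2

lemma repFun_canon (n : ℕ) (S : {S : Finset (ℤ × ℤ) // IsHexAnimal n S ∧ FitsStrip 4 S}) :
    Canon n (repFun n S).1 :=
  (Classical.choose_spec (exists_canon S.2.1 S.2.2)).1

noncomputable def quotEquiv (n : ℕ) :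
    Quot (fun S T : {S : Finset (ℤ × ℤ) // IsHexAnimal n S ∧ FitsStrip 4 S} =>
      TransEquiv S.1 T.1) ≃ {T // T ∈ canonFam n} where
  toFun := Quot.lift (repFun n) (by
    intro a b hab
    obtain ⟨v, hv⟩ := transEquiv_trans (transEquiv_symm (repFun_equiv n a))
      (transEquiv_trans hab (repFun_equiv n b))
    exact Subtype.ext (canon_unique (repFun_canon n a) (repFun_canon n b) hv))
  invFun := fun T => Quot.mk _ ⟨T.1, canon_isAnimal (mem_canonFam.1 T.2)⟩
  left_inv := by
    refine Quot.ind (fun S => ?_)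
    exact Quot.sound (transEquiv_symm (repFun_equiv n S))
  right_inv := by
    intro T
    refine Subtype.ext ?_
    obtain ⟨v, hv⟩ := repFun_equiv n ⟨T.1, canon_isAnimal (mem_canonFam.1 T.2)⟩
    exact (canon_unique (mem_canonFam.1 T.2)
      (repFun_canon n ⟨T.1, canon_isAnimal (mem_canonFam.1 T.2)⟩) hv).symm

lemma stripCount_eq (n : ℕ) : stripCount 4 n = (canonFam n).card := by
  rw [stripCount, Nat.card_congr (quotEquiv n), Nat.card_eq_fintype_card, Fintype.card_coe]

end StripAux
namespace StripAux

/-- P-structure: column 0 occupied, columns left-closed, even columns carry cells of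
diagonal 0 or 2, odd columns carry the single diagonal-1 cell. -/
def PP (S : Finset (ℤ × ℤ)) : Prop :=
  (∃ p ∈ S, p.1 = 0) ∧ (∀ p ∈ S, 0 ≤ p.1) ∧
  (∀ p ∈ S, p.1 = 0 ∨ ∃ q ∈ S, q.1 = p.1 - 1) ∧
  (∀ p ∈ S, (p.1 % 2 = 0 → tv p = 0 ∨ tv p = 2) ∧ (p.1 % 2 = 1 → tv p = 1))

instance : DecidablePred PP := fun _ => by unfold PP; infer_instance

lemma col_lt_card {S : Finset (ℤ × ℤ)} (h0 : ∀ p ∈ S, 0 ≤ p.1)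
    (hpred : ∀ p ∈ S, p.1 = 0 ∨ ∃ q ∈ S, q.1 = p.1 - 1) :
    ∀ p ∈ S, p.1 < S.card := by
  intro p hp
  have hsub : Finset.Icc (0:ℤ) p.1 ⊆ S.image Prod.fst := by
    intro x hx
    rw [Finset.mem_Icc] at hx
    obtain ⟨q, hq, hq'⟩ := interval_of_pred h0 hpred p hp x hx.1 hx.2
    exact Finset.mem_image.2 ⟨q, hq, hq'⟩
  have h1 := Finset.card_le_card hsub
  have h2 := Finset.card_image_le (f := Prod.fst) (s := S)
  rw [Int.card_Icc] at h1
  have := h0 p hp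
  omega

lemma pp_subset_grid {n : ℕ} {S : Finset (ℤ × ℤ)} (hc : S.card = n) (h : PP S) :
    S ⊆ grid n := by
  intro p hp
  have hcol := col_lt_card h.2.1 h.2.2.1 p hp
  have hst := h.2.2.2 p hp
  have h2 : 0 ≤ tv p ∧ tv p ≤ 3 := by
    have := h.2.1 p hp
    rcases Int.emod_two_eq p.1 with he | he
    · rcases hst.1 he with h' | h' <;> omega
    · have := hst.2 he; omega
  exact grid_of (h.2.1 p hp) (by omega) h2.1 h2.2

noncomputable def Pfam (n : ℕ) : Finset (Finset (ℤ × ℤ)) :=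
  ((grid n).powerset).filter (fun S => S.card = n ∧ PP S)

lemma mem_Pfam {n : ℕ} {S : Finset (ℤ × ℤ)} : S ∈ Pfam n ↔ S.card = n ∧ PP S :=
  ⟨fun h => (Finset.mem_filter.1 h).2,
   fun h => Finset.mem_filter.2 ⟨Finset.mem_powerset.2 (pp_subset_grid h.1 h.2), h⟩⟩

/-- the largest occupied column -/
def maxcol (S : Finset (ℤ × ℤ)) : ℤ := WithBot.unbotD 0 ((S.image Prod.fst).max)

lemma maxcol_spec {S : Finset (ℤ × ℤ)} (h : S.Nonempty) :
    (∃ p ∈ S, p.1 = maxcol S) ∧ ∀ p ∈ S, p.1 ≤ maxcol S := by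
  obtain ⟨m, hm⟩ := Finset.max_of_nonempty (h.image Prod.fst)
  have hmc : maxcol S = m := by rw [maxcol, hm]; rfl
  obtain ⟨p, hp, hp'⟩ := Finset.mem_image.1 (Finset.mem_of_max hm)
  refine ⟨⟨p, hp, by rw [hmc, hp']⟩, fun q hq => ?_⟩
  have : (q.1 : WithBot ℤ) ≤ (S.image Prod.fst).max :=
    Finset.le_max (Finset.mem_image.2 ⟨q, hq, rfl⟩)
  rw [hm] at this
  rw [hmc]
  exact_mod_cast this

lemma maxcol_eq {S : Finset (ℤ × ℤ)} {m : ℤ} (h : S.Nonempty)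
    (h1 : ∃ p ∈ S, p.1 = m) (h2 : ∀ p ∈ S, p.1 ≤ m) : maxcol S = m := by
  obtain ⟨⟨p, hp, hp'⟩, hle⟩ := maxcol_spec h
  obtain ⟨q, hq, hq'⟩ := h1
  have := h2 p hp
  have := hle q hq
  omega

lemma pp_nonempty {S : Finset (ℤ × ℤ)} (h : PP S) : S.Nonempty := by
  obtain ⟨p, hp, -⟩ := h.1; exact ⟨p, hp⟩

lemma pp_maxcol_nonneg {S : Finset (ℤ × ℤ)} (h : PP S) : 0 ≤ maxcol S := by
  obtain ⟨p, hp, hp0⟩ := h.1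
  have := (maxcol_spec (pp_nonempty h)).2 p hp
  omega

noncomputable def PEfam (n : ℕ) : Finset (Finset (ℤ × ℤ)) := (Pfam n).filter (fun S => maxcol S % 2 = 0)
noncomputable def POfam (n : ℕ) : Finset (Finset (ℤ × ℤ)) := (Pfam n).filter (fun S => maxcol S % 2 = 1)

lemma pfam_card_split (n : ℕ) : (Pfam n).card = (PEfam n).card + (POfam n).card := by
  rw [PEfam, POfam]
  rw [← Finset.card_filter_add_card_filter_not (p := fun S => maxcol S % 2 = 0)]
  have he : Finset.filter (fun a => ¬maxcol a % 2 = 0) (Pfam n) =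
      Finset.filter (fun S => maxcol S % 2 = 1) (Pfam n) :=
    Finset.filter_congr (fun S _ => by omega)
  rw [he]

/-- the unique cell with given column and diagonal -/
def cellAt (x t : ℤ) : ℤ × ℤ := (x, (t - x) / 2)

@[simp] lemma cellAt_fst (x t : ℤ) : (cellAt x t).1 = x := rfl

lemma tv_cellAt {x t : ℤ} (h : (t - x) % 2 = 0) : tv (cellAt x t) = t := by
  simp only [tv, cellAt]
  omega

lemma eq_cellAt {p : ℤ × ℤ} {x t : ℤ} (h1 : p.1 = x) (h2 : tv p = t) : p = cellAt x t := by
  simp only [tv] at h2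
  have : p.2 = (t - x) / 2 := by omega
  exact Prod.ext h1 this

end StripAux
namespace StripAux

/-- erasing the top column of a P-set -/
lemma pp_erase_top {S : Finset (ℤ × ℤ)} (h : PP S) (hm : 1 ≤ maxcol S) :
    PP (S.filter (fun p => p.1 ≠ maxcol S)) ∧
    maxcol (S.filter (fun p => p.1 ≠ maxcol S)) = maxcol S - 1 := by
  set m := maxcol S with hmdef
  set T := S.filter (fun p => p.1 ≠ m) with hT
  have spec := maxcol_spec (pp_nonempty h)
  obtain ⟨z, hz, hz0⟩ := h.1
  have hzT : z ∈ T := Finset.mem_filter.2 ⟨hz, by omega⟩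
  obtain ⟨p0, hp0, hp0'⟩ := spec.1
  obtain ⟨q0, hq0, hq0'⟩ := (h.2.2.1 p0 hp0).resolve_left (by omega)
  have hq0T : q0 ∈ T := Finset.mem_filter.2 ⟨hq0, by omega⟩
  have hPP : PP T := by
    refine ⟨⟨z, hzT, hz0⟩, fun p hp => h.2.1 p (Finset.mem_filter.1 hp).1, ?_,
      fun p hp => h.2.2.2 p (Finset.mem_filter.1 hp).1⟩
    intro p hp
    obtain ⟨hpS, hpm⟩ := Finset.mem_filter.1 hp
    rcases h.2.2.1 p hpS with h0 | ⟨q, hq, hq'⟩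
    · exact Or.inl h0
    · have hple := spec.2 p hpS
      exact Or.inr ⟨q, Finset.mem_filter.2 ⟨hq, by omega⟩, hq'⟩
  refine ⟨hPP, maxcol_eq ⟨z, hzT⟩ ⟨q0, hq0T, by omega⟩ ?_⟩
  intro p hp
  obtain ⟨hpS, hpm⟩ := Finset.mem_filter.1 hp
  have := spec.2 p hpS
  omega

/-- inserting a new top cell into a P-set -/
lemma pp_insert_top {T : Finset (ℤ × ℤ)} {c : ℤ × ℤ} (h : PP T)
    (hc1 : c.1 = maxcol T ∨ c.1 = maxcol T + 1)
    (hst : (c.1 % 2 = 0 → tv c = 0 ∨ tv c = 2) ∧ (c.1 % 2 = 1 → tv c = 1)) :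
    PP (insert c T) ∧ maxcol (insert c T) = c.1 := by
  have hne := pp_nonempty h
  have h0 := pp_maxcol_nonneg h
  have spec := maxcol_spec hne
  obtain ⟨z, hz, hz0⟩ := h.1
  obtain ⟨p0, hp0, hp0'⟩ := spec.1
  have hPP : PP (insert c T) := by
    refine ⟨⟨z, Finset.mem_insert_of_mem hz, hz0⟩, ?_, ?_, ?_⟩
    · intro p hp
      rcases Finset.mem_insert.1 hp with rfl | hp'
      · omega
      · exact h.2.1 p hp'
    · intro p hp
      rcases Finset.mem_insert.1 hp with rfl | hp'
      · by_cases hc0 : p.1 = 0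
        · exact Or.inl hc0
        · refine Or.inr ?_
          rcases hc1 with he | he
          · obtain ⟨q, hq, hq'⟩ := (h.2.2.1 p0 hp0).resolve_left (by omega)
            exact ⟨q, Finset.mem_insert_of_mem hq, by omega⟩
          · exact ⟨p0, Finset.mem_insert_of_mem hp0, by omega⟩
      · rcases h.2.2.1 p hp' with h0' | ⟨q, hq, hq'⟩
        · exact Or.inl h0'
        · exact Or.inr ⟨q, Finset.mem_insert_of_mem hq, hq'⟩
    · intro p hp
      rcases Finset.mem_insert.1 hp with rfl | hp'
      · exact hst
      · exact h.2.2.2 p hp'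
  refine ⟨hPP, maxcol_eq ⟨c, Finset.mem_insert_self c T⟩
    ⟨c, Finset.mem_insert_self c T, rfl⟩ ?_⟩
  intro p hp
  rcases Finset.mem_insert.1 hp with rfl | hp'
  · exact le_rfl
  · have := spec.2 p hp'
    omega

lemma not_mem_of_top {T : Finset (ℤ × ℤ)} {c : ℤ × ℤ} (hne : T.Nonempty)
    (hc : c.1 = maxcol T + 1) : c ∉ T := by
  intro hmem
  have := (maxcol_spec hne).2 c hmem
  omega

/-- in a P-set whose top column is odd, the top column consists of the single cell
`cellAt m 1`. -/
lemma odd_top_cell {S : Finset (ℤ × ℤ)} (h : PP S) (hodd : maxcol S % 2 = 1) :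
    cellAt (maxcol S) 1 ∈ S ∧ ∀ p ∈ S, p.1 = maxcol S → p = cellAt (maxcol S) 1 := by
  have spec := maxcol_spec (pp_nonempty h)
  have huniq : ∀ p ∈ S, p.1 = maxcol S → p = cellAt (maxcol S) 1 := by
    intro p hp hp'
    exact eq_cellAt hp' ((h.2.2.2 p hp).2 (by omega))
  obtain ⟨p0, hp0, hp0'⟩ := spec.1
  exact ⟨huniq p0 hp0 hp0' ▸ hp0, huniq⟩

lemma even_top_cases {S : Finset (ℤ × ℤ)} (h : PP S) (heven : maxcol S % 2 = 0) :
    ∀ p ∈ S, p.1 = maxcol S → p = cellAt (maxcol S) 0 ∨ p = cellAt (maxcol S) 2 := by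
  intro p hp hp'
  rcases (h.2.2.2 p hp).1 (by omega) with ht | ht
  · exact Or.inl (eq_cellAt hp' ht)
  · exact Or.inr (eq_cellAt hp' ht)

lemma tv_cellAt_even {m t : ℤ} (hm : m % 2 = 0) (ht : t % 2 = 0) : tv (cellAt m t) = t :=
  tv_cellAt (by omega)

lemma tv_cellAt_odd {m : ℤ} (hm : m % 2 = 1) : tv (cellAt m 1) = 1 :=
  tv_cellAt (by omega)

/-- Bijection β1: P-sets with odd top column ↔ P-sets one cell smaller with even top. -/
lemma po_card {n : ℕ} (hn : 2 ≤ n) : (POfam n).card = (PEfam (n - 1)).card := by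
  apply Finset.card_nbij' (i := fun S => S.filter (fun p => p.1 ≠ maxcol S))
    (j := fun T => insert (cellAt (maxcol T + 1) 1) T)
  · -- maps into PEfam (n-1)
    intro S hS
    beta_reduce
    obtain ⟨hmem, hodd⟩ := Finset.mem_filter.1 hS
    obtain ⟨hcard, hPP⟩ := mem_Pfam.1 hmem
    have hm1 : 1 ≤ maxcol S := by
      have := pp_maxcol_nonneg hPP; omega
    obtain ⟨hPP', hmax'⟩ := pp_erase_top hPP hm1
    have htop := odd_top_cell hPP hodd
    have hfe : S.filter (fun p => p.1 ≠ maxcol S) = S.erase (cellAt (maxcol S) 1) := by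
      ext p
      simp only [Finset.mem_filter, Finset.mem_erase]
      constructor
      · rintro ⟨h1, h2⟩
        exact ⟨fun he => h2 (by rw [he]; rfl), h1⟩
      · rintro ⟨h1, h2⟩
        exact ⟨h2, fun he => h1 (htop.2 p h2 he)⟩
    refine Finset.mem_filter.2 ⟨mem_Pfam.2 ⟨?_, hPP'⟩, by omega⟩
    rw [hfe, Finset.card_erase_of_mem htop.1, hcard]
  · -- maps back into POfam n
    intro T hT
    beta_reduce
    obtain ⟨hmem, heven⟩ := Finset.mem_filter.1 hT
    obtain ⟨hcard, hPP⟩ := mem_Pfam.1 hmem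
    have hst : ((cellAt (maxcol T + 1) 1).1 % 2 = 0 → tv (cellAt (maxcol T + 1) 1) = 0 ∨
        tv (cellAt (maxcol T + 1) 1) = 2) ∧
        ((cellAt (maxcol T + 1) 1).1 % 2 = 1 → tv (cellAt (maxcol T + 1) 1) = 1) := by
      rw [cellAt_fst]
      refine ⟨by omega, fun _ => tv_cellAt_odd (by omega)⟩
    obtain ⟨hPP', hmax'⟩ := pp_insert_top hPP (Or.inr rfl) hst
    have hnotmem := not_mem_of_top (pp_nonempty hPP) (cellAt_fst _ 1)
    refine Finset.mem_filter.2 ⟨mem_Pfam.2 ⟨?_, hPP'⟩, by rw [hmax', cellAt_fst]; omega⟩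
    rw [Finset.card_insert_of_notMem hnotmem, hcard]
    omega
  · -- left inverse
    intro S hS
    beta_reduce
    obtain ⟨hmem, hodd⟩ := Finset.mem_filter.1 hS
    obtain ⟨hcard, hPP⟩ := mem_Pfam.1 hmem
    have hm1 : 1 ≤ maxcol S := by
      have := pp_maxcol_nonneg hPP; omega
    obtain ⟨hPP', hmax'⟩ := pp_erase_top hPP hm1
    have htop := odd_top_cell hPP hodd
    rw [hmax']
    have : maxcol S - 1 + 1 = maxcol S := by omega
    rw [this]
    ext p
    simp only [Finset.mem_insert, Finset.mem_filter]
    constructor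
    · rintro (rfl | ⟨h1, _⟩)
      · exact htop.1
      · exact h1
    · intro hp
      by_cases hc : p.1 = maxcol S
      · exact Or.inl (htop.2 p hp hc)
      · exact Or.inr ⟨hp, hc⟩
  · -- right inverse
    intro T hT
    beta_reduce
    obtain ⟨hmem, heven⟩ := Finset.mem_filter.1 hT
    obtain ⟨hcard, hPP⟩ := mem_Pfam.1 hmem
    have hst : ((cellAt (maxcol T + 1) 1).1 % 2 = 0 → tv (cellAt (maxcol T + 1) 1) = 0 ∨
        tv (cellAt (maxcol T + 1) 1) = 2) ∧
        ((cellAt (maxcol T + 1) 1).1 % 2 = 1 → tv (cellAt (maxcol T + 1) 1) = 1) := by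
      rw [cellAt_fst]
      refine ⟨by omega, fun _ => tv_cellAt_odd (by omega)⟩
    obtain ⟨hPP', hmax'⟩ := pp_insert_top hPP (Or.inr rfl) hst
    have spec := maxcol_spec (pp_nonempty hPP)
    rw [hmax', cellAt_fst]
    ext p
    simp only [Finset.mem_filter, Finset.mem_insert]
    constructor
    · rintro ⟨rfl | hp, h2⟩
      · exact absurd (cellAt_fst _ _) h2
      · exact hp
    · intro hp
      have := spec.2 p hp
      exact ⟨Or.inr hp, by omega⟩

end StripAux
namespace StripAux

lemma cellAt_inj {x t t' : ℤ} (h : cellAt x t = cellAt x t')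
    (hp : (t - x) % 2 = 0) (hp' : (t' - x) % 2 = 0) : t = t' := by
  have h2 := congrArg Prod.snd h
  simp only [cellAt] at h2
  omega

noncomputable def PEcell (e : ℤ) (n : ℕ) : Finset (Finset (ℤ × ℤ)) :=
  (PEfam n).filter (fun S => cellAt (maxcol S) e ∈ S ∧ cellAt (maxcol S) (2 - e) ∉ S)

noncomputable def PEboth (n : ℕ) : Finset (Finset (ℤ × ℤ)) :=
  (PEfam n).filter (fun S => cellAt (maxcol S) 0 ∈ S ∧ cellAt (maxcol S) 2 ∈ S)

/-- Bijection β2: P-sets with even top column occupied by exactly the `e`-cell. -/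
lemma pecell_card {n : ℕ} {e : ℤ} (hn : 2 ≤ n) (he : e = 0 ∨ e = 2) :
    (PEcell e n).card = (POfam (n - 1)).card := by
  have key : ∀ S ∈ PEcell e n,
      (1 ≤ maxcol S) ∧ (∀ p ∈ S, p.1 = maxcol S → p = cellAt (maxcol S) e) := by
    intro S hS
    obtain ⟨hS', hce, hcne⟩ := Finset.mem_filter.1 hS
    obtain ⟨hmem, heven⟩ := Finset.mem_filter.1 hS'
    obtain ⟨hcard, hPP⟩ := mem_Pfam.1 hmem
    have huniq : ∀ p ∈ S, p.1 = maxcol S → p = cellAt (maxcol S) e := by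
      intro p hp hp'
      rcases even_top_cases hPP heven p hp hp' with h | h <;> rcases he with rfl | rfl
      · exact h
      · exact absurd (h ▸ hp) (by norm_num at hcne ⊢; exact hcne)
      · exact absurd (h ▸ hp) (by norm_num at hcne ⊢; exact hcne)
      · exact h
    refine ⟨?_, huniq⟩
    rcases (pp_maxcol_nonneg hPP).lt_or_eq with h | h
    · omega
    · exfalso
      have hsub : S ⊆ {cellAt (maxcol S) e} := by
        intro p hp
        have h1 := hPP.2.1 p hp
        have h2 := (maxcol_spec (pp_nonempty hPP)).2 p hp
        rw [Finset.mem_singleton]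
        exact huniq p hp (by omega)
      have := Finset.card_le_card hsub
      simp at this
      omega
  apply Finset.card_nbij' (i := fun S => S.filter (fun p => p.1 ≠ maxcol S))
    (j := fun T => insert (cellAt (maxcol T + 1) e) T)
  · -- into POfam (n-1)
    intro S hS
    beta_reduce
    obtain ⟨hm1, huniq⟩ := key S hS
    obtain ⟨hS', hce, hcne⟩ := Finset.mem_filter.1 hS
    obtain ⟨hmem, heven⟩ := Finset.mem_filter.1 hS'
    obtain ⟨hcard, hPP⟩ := mem_Pfam.1 hmem
    obtain ⟨hPP', hmax'⟩ := pp_erase_top hPP hm1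
    have hfe : S.filter (fun p => p.1 ≠ maxcol S) = S.erase (cellAt (maxcol S) e) := by
      ext p
      simp only [Finset.mem_filter, Finset.mem_erase]
      constructor
      · rintro ⟨h1, h2⟩
        exact ⟨fun hc => h2 (by rw [hc]; rfl), h1⟩
      · rintro ⟨h1, h2⟩
        exact ⟨h2, fun hc => h1 (huniq p h2 hc)⟩
    refine Finset.mem_filter.2 ⟨mem_Pfam.2 ⟨?_, hPP'⟩, by omega⟩
    rw [hfe, Finset.card_erase_of_mem hce, hcard]
  · -- back into PEcell e n
    intro T hT
    beta_reduce
    obtain ⟨hmem, hodd⟩ := Finset.mem_filter.1 hT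
    obtain ⟨hcard, hPP⟩ := mem_Pfam.1 hmem
    set c := cellAt (maxcol T + 1) e with hc
    have hc1 : c.1 = maxcol T + 1 := rfl
    have htvc : tv c = e := tv_cellAt (by omega)
    have hst : (c.1 % 2 = 0 → tv c = 0 ∨ tv c = 2) ∧ (c.1 % 2 = 1 → tv c = 1) := by
      constructor
      · intro _; omega
      · intro hpar; omega
    obtain ⟨hPP', hmax'⟩ := pp_insert_top hPP (Or.inr hc1) hst
    have hnotmem := not_mem_of_top (pp_nonempty hPP) hc1
    refine Finset.mem_filter.2 ⟨Finset.mem_filter.2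
      ⟨mem_Pfam.2 ⟨?_, hPP'⟩, by rw [hmax', hc1]; omega⟩, ?_, ?_⟩
    · rw [Finset.card_insert_of_notMem hnotmem, hcard]; omega
    · rw [hmax', hc1]
      exact Finset.mem_insert_self c T
    · rw [hmax', hc1]
      intro hmem'
      rcases Finset.mem_insert.1 hmem' with hh | hh
      · rw [hc] at hh
        have := cellAt_inj hh (by omega) (by omega)
        omega
      · exact not_mem_of_top (pp_nonempty hPP) (cellAt_fst (maxcol T + 1) (2 - e)) hh
  · -- left inverse
    intro S hS
    beta_reduce
    obtain ⟨hm1, huniq⟩ := key S hS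
    obtain ⟨hS', hce, hcne⟩ := Finset.mem_filter.1 hS
    obtain ⟨hmem, heven⟩ := Finset.mem_filter.1 hS'
    obtain ⟨hcard, hPP⟩ := mem_Pfam.1 hmem
    obtain ⟨hPP', hmax'⟩ := pp_erase_top hPP hm1
    rw [hmax']
    have h1 : maxcol S - 1 + 1 = maxcol S := by omega
    rw [h1]
    ext p
    simp only [Finset.mem_insert, Finset.mem_filter]
    constructor
    · rintro (rfl | ⟨h1', _⟩)
      · exact hce
      · exact h1'
    · intro hp
      by_cases hcc : p.1 = maxcol S
      · exact Or.inl (huniq p hp hcc)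
      · exact Or.inr ⟨hp, hcc⟩
  · -- right inverse
    intro T hT
    beta_reduce
    obtain ⟨hmem, hodd⟩ := Finset.mem_filter.1 hT
    obtain ⟨hcard, hPP⟩ := mem_Pfam.1 hmem
    set c := cellAt (maxcol T + 1) e with hc
    have hc1 : c.1 = maxcol T + 1 := rfl
    have htvc : tv c = e := tv_cellAt (by omega)
    have hst : (c.1 % 2 = 0 → tv c = 0 ∨ tv c = 2) ∧ (c.1 % 2 = 1 → tv c = 1) := by
      constructor
      · intro _; omega
      · intro hpar; omega
    obtain ⟨hPP', hmax'⟩ := pp_insert_top hPP (Or.inr hc1) hst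
    have spec := maxcol_spec (pp_nonempty hPP)
    rw [hmax', hc1]
    ext p
    simp only [Finset.mem_filter, Finset.mem_insert]
    constructor
    · rintro ⟨rfl | hp, h2⟩
      · exact absurd hc1 h2
      · exact hp
    · intro hp
      have := spec.2 p hp
      exact ⟨Or.inr hp, by omega⟩

end StripAux
namespace StripAux

/-- Bijection β3: P-sets with even top column occupied by both cells. -/
lemma peboth_card {n : ℕ} (hn : 3 ≤ n) : (PEboth n).card = (POfam (n - 2)).card := by
  have key : ∀ S ∈ PEboth n, 2 ≤ maxcol S := by
    intro S hS
    obtain ⟨hS', hc0, hc2⟩ := Finset.mem_filter.1 hS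
    obtain ⟨hmem, heven⟩ := Finset.mem_filter.1 hS'
    obtain ⟨hcard, hPP⟩ := mem_Pfam.1 hmem
    rcases (pp_maxcol_nonneg hPP).lt_or_eq with h | h
    · omega
    · exfalso
      have hsub : S ⊆ {cellAt (maxcol S) 0, cellAt (maxcol S) 2} := by
        intro p hp
        have h1 := hPP.2.1 p hp
        have h2 := (maxcol_spec (pp_nonempty hPP)).2 p hp
        rcases even_top_cases hPP heven p hp (by omega) with h' | h' <;>
          simp [h', Finset.mem_insert]
      have hle := Finset.card_le_card hsub
      have : ({cellAt (maxcol S) 0, cellAt (maxcol S) 2} : Finset (ℤ × ℤ)).card ≤ 2 :=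
        Finset.card_insert_le _ _ |>.trans (by simp)
      omega
  have hne02 : ∀ m : ℤ, m % 2 = 0 → cellAt m 0 ≠ cellAt m 2 := by
    intro m hm h
    have := cellAt_inj h (by omega) (by omega)
    omega
  apply Finset.card_nbij' (i := fun S => S.filter (fun p => p.1 ≠ maxcol S))
    (j := fun T => insert (cellAt (maxcol T + 1) 2) (insert (cellAt (maxcol T + 1) 0) T))
  · intro S hS
    beta_reduce
    have hm2 := key S hS
    obtain ⟨hS', hc0, hc2⟩ := Finset.mem_filter.1 hS
    obtain ⟨hmem, heven⟩ := Finset.mem_filter.1 hS'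
    obtain ⟨hcard, hPP⟩ := mem_Pfam.1 hmem
    obtain ⟨hPP', hmax'⟩ := pp_erase_top hPP (by omega)
    have hfe : S.filter (fun p => p.1 ≠ maxcol S) =
        (S.erase (cellAt (maxcol S) 2)).erase (cellAt (maxcol S) 0) := by
      ext p
      simp only [Finset.mem_filter, Finset.mem_erase]
      constructor
      · rintro ⟨h1, h2⟩
        exact ⟨fun hc => h2 (by rw [hc]; rfl), fun hc => h2 (by rw [hc]; rfl), h1⟩
      · rintro ⟨h1, h2, h3⟩
        refine ⟨h3, fun hc => ?_⟩
        rcases even_top_cases hPP heven p h3 hc with h' | h'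
        · exact h1 h'
        · exact h2 h'
    refine Finset.mem_filter.2 ⟨mem_Pfam.2 ⟨?_, hPP'⟩, by omega⟩
    rw [hfe, Finset.card_erase_of_mem, Finset.card_erase_of_mem hc2, hcard]
    · omega
    · exact Finset.mem_erase.2 ⟨hne02 _ heven, hc0⟩
  · intro T hT
    beta_reduce
    obtain ⟨hmem, hodd⟩ := Finset.mem_filter.1 hT
    obtain ⟨hcard, hPP⟩ := mem_Pfam.1 hmem
    set c0 := cellAt (maxcol T + 1) 0 with hcc0
    set c2 := cellAt (maxcol T + 1) 2 with hcc2
    have hc01 : c0.1 = maxcol T + 1 := rfl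
    have hc21 : c2.1 = maxcol T + 1 := rfl
    have htv0 : tv c0 = 0 := tv_cellAt (by omega)
    have htv2 : tv c2 = 2 := tv_cellAt (by omega)
    obtain ⟨hPP1, hmax1⟩ := pp_insert_top hPP (Or.inr hc01)
      ⟨fun _ => by omega, fun hpar => by omega⟩
    obtain ⟨hPP2, hmax2⟩ := pp_insert_top hPP1 (Or.inl (by rw [hmax1, hc21, hc01]))
      ⟨fun _ => by omega, fun hpar => by omega⟩
    have hn0 : c0 ∉ T := not_mem_of_top (pp_nonempty hPP) hc01
    have hn2 : c2 ∉ insert c0 T := by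
      intro h
      rcases Finset.mem_insert.1 h with h | h
      · rw [hcc0, hcc2] at h
        have := cellAt_inj h (by omega) (by omega)
        omega
      · exact not_mem_of_top (pp_nonempty hPP) hc21 h
    rw [hc21] at hmax2
    refine Finset.mem_filter.2 ⟨Finset.mem_filter.2
      ⟨mem_Pfam.2 ⟨?_, hPP2⟩, by rw [hmax2]; omega⟩, ?_, ?_⟩
    · rw [Finset.card_insert_of_notMem hn2, Finset.card_insert_of_notMem hn0, hcard]
      omega
    · rw [hmax2]
      exact Finset.mem_insert_of_mem (Finset.mem_insert_self c0 T)
    · rw [hmax2]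
      exact Finset.mem_insert_self c2 _
  · -- left inverse
    intro S hS
    beta_reduce
    have hm2 := key S hS
    obtain ⟨hS', hc0, hc2⟩ := Finset.mem_filter.1 hS
    obtain ⟨hS'', heven⟩ := Finset.mem_filter.1 hS'
    obtain ⟨hcard, hPP⟩ := mem_Pfam.1 hS''
    obtain ⟨hPP', hmax'⟩ := pp_erase_top hPP (by omega)
    rw [hmax']
    have h1 : maxcol S - 1 + 1 = maxcol S := by omega
    rw [h1]
    ext p
    simp only [Finset.mem_insert, Finset.mem_filter]
    constructor
    · rintro (rfl | rfl | ⟨h1', _⟩)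
      · exact hc2
      · exact hc0
      · exact h1'
    · intro hp
      by_cases hcc : p.1 = maxcol S
      · rcases even_top_cases hPP heven p hp hcc with h' | h'
        · exact Or.inr (Or.inl h')
        · exact Or.inl h'
      · exact Or.inr (Or.inr ⟨hp, hcc⟩)
  · -- right inverse
    intro T hT
    beta_reduce
    obtain ⟨hmem, hodd⟩ := Finset.mem_filter.1 hT
    obtain ⟨hcard, hPP⟩ := mem_Pfam.1 hmem
    set c0 := cellAt (maxcol T + 1) 0 with hcc0
    set c2 := cellAt (maxcol T + 1) 2 with hcc2
    have hc01 : c0.1 = maxcol T + 1 := rfl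
    have hc21 : c2.1 = maxcol T + 1 := rfl
    have htv0 : tv c0 = 0 := tv_cellAt (by omega)
    have htv2 : tv c2 = 2 := tv_cellAt (by omega)
    obtain ⟨hPP1, hmax1⟩ := pp_insert_top hPP (Or.inr hc01)
      ⟨fun _ => by omega, fun hpar => by omega⟩
    obtain ⟨hPP2, hmax2⟩ := pp_insert_top hPP1 (Or.inl (by rw [hmax1, hc21, hc01]))
      ⟨fun _ => by omega, fun hpar => by omega⟩
    rw [hc21] at hmax2
    have spec := maxcol_spec (pp_nonempty hPP)
    rw [hmax2]
    ext p
    simp only [Finset.mem_filter, Finset.mem_insert]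
    constructor
    · rintro ⟨rfl | rfl | hp, h2⟩
      · exact absurd hc21 h2
      · exact absurd hc01 h2
      · exact hp
    · intro hp
      have := spec.2 p hp
      exact ⟨Or.inr (Or.inr hp), by omega⟩

end StripAux
namespace StripAux

lemma tv_parity (p : ℤ × ℤ) : tv p % 2 = p.1 % 2 := by
  simp only [tv]; omega

lemma pe_top_cases {n : ℕ} : ∀ S ∈ PEfam n,
    cellAt (maxcol S) 0 ∈ S ∨ cellAt (maxcol S) 2 ∈ S := by
  intro S hS
  obtain ⟨hmem, heven⟩ := Finset.mem_filter.1 hS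
  obtain ⟨hcard, hPP⟩ := mem_Pfam.1 hmem
  obtain ⟨p0, hp0, hp0'⟩ := (maxcol_spec (pp_nonempty hPP)).1
  rcases even_top_cases hPP heven p0 hp0 hp0' with h | h
  · exact Or.inl (h ▸ hp0)
  · exact Or.inr (h ▸ hp0)

lemma pe_card_split (n : ℕ) :
    (PEfam n).card = (PEcell 0 n).card + (PEcell 2 n).card + (PEboth n).card := by
  classical
  have hA : ((PEfam n).filter (fun S => cellAt (maxcol S) 0 ∈ S)).card
      + ((PEfam n).filter (fun S => ¬ cellAt (maxcol S) 0 ∈ S)).card = (PEfam n).card :=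
    Finset.card_filter_add_card_filter_not _
  have hB : (((PEfam n).filter (fun S => cellAt (maxcol S) 0 ∈ S)).filter
        (fun S => cellAt (maxcol S) 2 ∈ S)).card
      + (((PEfam n).filter (fun S => cellAt (maxcol S) 0 ∈ S)).filter
        (fun S => ¬ cellAt (maxcol S) 2 ∈ S)).card
      = ((PEfam n).filter (fun S => cellAt (maxcol S) 0 ∈ S)).card :=
    Finset.card_filter_add_card_filter_not _
  have e1 : (((PEfam n).filter (fun S => cellAt (maxcol S) 0 ∈ S)).filter
      (fun S => cellAt (maxcol S) 2 ∈ S)).card = (PEboth n).card := by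
    apply congrArg Finset.card
    ext S
    simp only [PEboth, Finset.mem_filter]
    tauto
  have e2 : (((PEfam n).filter (fun S => cellAt (maxcol S) 0 ∈ S)).filter
      (fun S => ¬ cellAt (maxcol S) 2 ∈ S)).card = (PEcell 0 n).card := by
    apply congrArg Finset.card
    ext S
    simp only [PEcell, Finset.mem_filter]
    have : (2 : ℤ) - 0 = 2 := by norm_num
    rw [this]
    tauto
  have e3 : ((PEfam n).filter (fun S => ¬ cellAt (maxcol S) 0 ∈ S)).card
      = (PEcell 2 n).card := by
    apply congrArg Finset.card
    ext S
    simp only [PEcell, Finset.mem_filter]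
    have : (2 : ℤ) - 2 = 0 := by norm_num
    rw [this]
    constructor
    · rintro ⟨h1, h2⟩
      exact ⟨h1, (pe_top_cases S h1).resolve_left h2, h2⟩
    · rintro ⟨h1, h2, h3⟩
      exact ⟨h1, h3⟩
  omega

/-- For `n ≥ 2`, the type-I canonical animals are exactly the P-sets. -/
lemma ifam_eq {n : ℕ} (hn : 2 ≤ n) :
    (canonFam n).filter (fun S => ∀ p ∈ S, tv p ≤ 2) = Pfam n := by
  ext S
  simp only [Finset.mem_filter, mem_canonFam, mem_Pfam]
  constructor
  · rintro ⟨hcan, hle⟩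
    refine ⟨hcan.1, hcan.2.1, hcan.2.2.1, hcan.2.2.2.2.2.2, ?_⟩
    intro p hp
    have hpar := tv_parity p
    have h0 := hcan.2.2.2.1 p hp
    have h2 := hle p hp
    exact ⟨fun h => by omega, fun h => by omega⟩
  · rintro ⟨hcard, hPP⟩
    have hle : ∀ p ∈ S, tv p ≤ 2 := by
      intro p hp
      have hpar := tv_parity p
      have hst := hPP.2.2.2 p hp
      rcases Int.emod_two_eq p.1 with h | h
      · rcases hst.1 h with h' | h' <;> omega
      · have := hst.2 h; omega
    have hge : ∀ p ∈ S, 0 ≤ tv p := by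
      intro p hp
      have hpar := tv_parity p
      have hst := hPP.2.2.2 p hp
      rcases Int.emod_two_eq p.1 with h | h
      · rcases hst.1 h with h' | h' <;> omega
      · have := hst.2 h; omega
    refine ⟨⟨hcard, hPP.1, hPP.2.1, hge, ?_, ?_, hPP.2.2.1⟩, hle⟩
    · intro p hp q hq
      have := hle p hp; have := hge q hq; omega
    · by_contra hno
      push_neg at hno
      have hallev : ∀ p ∈ S, p.1 % 2 = 0 := by
        intro p hp
        rcases Int.emod_two_eq p.1 with h | h
        · exact h
        · have := (hPP.2.2.2 p hp).2 h
          have := hno p hp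
          omega
      have hcol0 : ∀ p ∈ S, p.1 = 0 := by
        intro p hp
        rcases hPP.2.2.1 p hp with h | ⟨q, hq, hq'⟩
        · exact h
        · have h1 := hallev p hp
          have h2 := hallev q hq
          omega
      have hsub : S ⊆ {cellAt 0 2} := by
        intro p hp
        have h1 := hcol0 p hp
        have h2 := hle p hp
        have h3 := hno p hp
        rw [Finset.mem_singleton]
        exact eq_cellAt h1 (by omega)
      have := Finset.card_le_card hsub
      simp at this
      omega

/-- the forced staircase configuration -/
def stair (e : ℤ) (k : ℕ) : Finset (ℤ × ℤ) :=
  (Finset.range k).image (fun i : ℕ => cellAt (i : ℤ) (if (i : ℤ) % 2 = 0 then e else 1))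

lemma stair_inj (e : ℤ) : Function.Injective
    (fun i : ℕ => cellAt (i : ℤ) (if (i : ℤ) % 2 = 0 then e else 1)) := by
  intro i j h
  have := congrArg Prod.fst h
  simp only [cellAt_fst] at this
  exact_mod_cast this

lemma stair_card (e : ℤ) (k : ℕ) : (stair e k).card = k := by
  rw [stair, Finset.card_image_of_injective _ (stair_inj e), Finset.card_range]

lemma mem_stair {e : ℤ} {k : ℕ} {p : ℤ × ℤ} : p ∈ stair e k ↔
    ∃ i : ℕ, i < k ∧ p = cellAt (i : ℤ) (if (i : ℤ) % 2 = 0 then e else 1) := by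
  simp only [stair, Finset.mem_image, Finset.mem_range]
  constructor
  · rintro ⟨i, h1, rfl⟩; exact ⟨i, h1, rfl⟩
  · rintro ⟨i, h1, rfl⟩; exact ⟨i, h1, rfl⟩

lemma tv_stair_cell {e : ℤ} (he : e = 0 ∨ e = 2) (i : ℕ) :
    tv (cellAt (i : ℤ) (if (i : ℤ) % 2 = 0 then e else 1)) =
      (if (i : ℤ) % 2 = 0 then e else 1) := by
  rcases Int.emod_two_eq (i : ℤ) with h | h
  · rw [if_pos h]; exact tv_cellAt (by omega)
  · rw [if_neg (by omega : ¬ ((i : ℤ) % 2 = 0))]; exact tv_cellAt (by omega)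

lemma stair_mem_fam {e : ℤ} {k : ℕ} (he : e = 0 ∨ e = 2) (hk : 1 ≤ k) :
    (stair e k).card = k ∧ PP (stair e k) ∧ ∀ p ∈ stair e k, tv p ≠ 2 - e := by
  refine ⟨stair_card e k, ⟨?_, ?_, ?_, ?_⟩, ?_⟩
  · refine ⟨cellAt 0 e, mem_stair.2 ⟨0, by omega, by norm_num⟩, rfl⟩
  · intro p hp
    obtain ⟨i, hik, rfl⟩ := mem_stair.1 hp
    simp only [cellAt_fst]
    positivity
  · intro p hp
    obtain ⟨i, hik, rfl⟩ := mem_stair.1 hp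
    simp only [cellAt_fst]
    by_cases hi : i = 0
    · subst hi; norm_num
    · refine Or.inr ⟨cellAt ((i-1 : ℕ) : ℤ) (if ((i-1 : ℕ) : ℤ) % 2 = 0 then e else 1),
        mem_stair.2 ⟨i - 1, by omega, rfl⟩, ?_⟩
      simp only [cellAt_fst]
      omega
  · intro p hp
    obtain ⟨i, hik, rfl⟩ := mem_stair.1 hp
    rw [tv_stair_cell he]
    simp only [cellAt_fst]
    rcases Int.emod_two_eq (i : ℤ) with h | h
    · rw [if_pos h]; exact ⟨fun _ => by omega, fun hc => by omega⟩
    · rw [if_neg (by omega : ¬ ((i : ℤ) % 2 = 0))]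
      exact ⟨fun hc => by omega, fun _ => rfl⟩
  · intro p hp
    obtain ⟨i, hik, rfl⟩ := mem_stair.1 hp
    rw [tv_stair_cell he]
    rcases Int.emod_two_eq (i : ℤ) with h | h
    · rw [if_pos h]; omega
    · rw [if_neg (by omega : ¬ ((i : ℤ) % 2 = 0))]; omega

lemma stair_unique {e : ℤ} {k : ℕ} {S : Finset (ℤ × ℤ)} (he : e = 0 ∨ e = 2)
    (hcard : S.card = k) (hPP : PP S) (hno : ∀ p ∈ S, tv p ≠ 2 - e) :
    S = stair e k := by
  have hdet : ∀ p ∈ S, p = cellAt p.1 (if p.1 % 2 = 0 then e else 1) := by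
    intro p hp
    have hst := hPP.2.2.2 p hp
    rcases Int.emod_two_eq p.1 with h | h
    · rw [if_pos h]
      rcases hst.1 h with h' | h' <;>
      · refine eq_cellAt rfl ?_
        have := hno p hp
        omega
    · rw [if_neg (by omega : ¬ (p.1 % 2 = 0))]
      exact eq_cellAt rfl (hst.2 h)
  have hinj : Set.InjOn Prod.fst (S : Set (ℤ × ℤ)) := by
    intro p hp q hq hpq
    rw [hdet p hp, hdet q hq, hpq]
  have himcard : (S.image Prod.fst).card = k := by
    rw [Finset.card_image_of_injOn hinj, hcard]
  have hsub : S.image Prod.fst ⊆ Finset.Icc (0 : ℤ) (k - 1) := by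
    intro x hx
    obtain ⟨p, hp, rfl⟩ := Finset.mem_image.1 hx
    have h1 := hPP.2.1 p hp
    have h2 := col_lt_card hPP.2.1 hPP.2.2.1 p hp
    rw [hcard] at h2
    rw [Finset.mem_Icc]
    omega
  have him : S.image Prod.fst = Finset.Icc (0 : ℤ) (k - 1) := by
    apply Finset.eq_of_subset_of_card_le hsub
    rw [himcard, Int.card_Icc]
    omega
  ext p
  constructor
  · intro hp
    have h1 := hPP.2.1 p hp
    have h2 := col_lt_card hPP.2.1 hPP.2.2.1 p hp
    rw [hcard] at h2
    refine mem_stair.2 ⟨p.1.toNat, by omega, ?_⟩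
    have hc : ((p.1.toNat : ℕ) : ℤ) = p.1 := by omega
    rw [hc]
    exact hdet p hp
  · intro hp
    obtain ⟨i, hik, rfl⟩ := mem_stair.1 hp
    have hx : (i : ℤ) ∈ S.image Prod.fst := by
      rw [him, Finset.mem_Icc]
      omega
    obtain ⟨q, hq, hq'⟩ := Finset.mem_image.1 hx
    have hdq := hdet q hq
    rw [hq'] at hdq
    rw [← hdq]
    exact hq

/-- inclusion–exclusion: P-sets containing both a 0-cell and a 2-cell -/
lemma pxfam_card {k : ℕ} (hk : 1 ≤ k) :
    ((Pfam k).filter (fun S => (∃ p ∈ S, tv p = 0) ∧ (∃ p ∈ S, tv p = 2))).card + 2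
      = (Pfam k).card := by
  classical
  have hA : ((Pfam k).filter (fun S => ∃ p ∈ S, tv p = 0)).card
      + ((Pfam k).filter (fun S => ¬ ∃ p ∈ S, tv p = 0)).card = (Pfam k).card :=
    Finset.card_filter_add_card_filter_not _
  have hB : (((Pfam k).filter (fun S => ∃ p ∈ S, tv p = 0)).filter
        (fun S => ∃ p ∈ S, tv p = 2)).card
      + (((Pfam k).filter (fun S => ∃ p ∈ S, tv p = 0)).filter
        (fun S => ¬ ∃ p ∈ S, tv p = 2)).card
      = ((Pfam k).filter (fun S => ∃ p ∈ S, tv p = 0)).card :=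
    Finset.card_filter_add_card_filter_not _
  have e1 : ((Pfam k).filter (fun S => ¬ ∃ p ∈ S, tv p = 0)).card = 1 := by
    have h : (Pfam k).filter (fun S => ¬ ∃ p ∈ S, tv p = 0) = {stair 2 k} := by
      ext S
      simp only [Finset.mem_filter, mem_Pfam, Finset.mem_singleton]
      constructor
      · rintro ⟨⟨hcard, hPP⟩, hno⟩
        push_neg at hno
        exact stair_unique (Or.inr rfl) hcard hPP (fun p hp => by have := hno p hp; omega)
      · rintro rfl
        obtain ⟨h1, h2, h3⟩ := stair_mem_fam (Or.inr rfl) hk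
        refine ⟨⟨h1, h2⟩, ?_⟩
        push_neg
        exact fun p hp => by have := h3 p hp; omega
    rw [h]
    exact Finset.card_singleton _
  have e2 : (((Pfam k).filter (fun S => ∃ p ∈ S, tv p = 0)).filter
      (fun S => ¬ ∃ p ∈ S, tv p = 2)).card = 1 := by
    have h : ((Pfam k).filter (fun S => ∃ p ∈ S, tv p = 0)).filter
        (fun S => ¬ ∃ p ∈ S, tv p = 2) = {stair 0 k} := by
      ext S
      simp only [Finset.mem_filter, mem_Pfam, Finset.mem_singleton]
      constructor
      · rintro ⟨⟨⟨hcard, hPP⟩, h0⟩, h2⟩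
        push_neg at h2
        exact stair_unique (Or.inl rfl) hcard hPP (fun p hp => by have := h2 p hp; omega)
      · rintro rfl
        obtain ⟨h1, h2, h3⟩ := stair_mem_fam (Or.inl rfl) hk
        refine ⟨⟨⟨h1, h2⟩, ?_⟩, ?_⟩
        · exact ⟨cellAt 0 0, mem_stair.2 ⟨0, by omega, by norm_num⟩, tv_cellAt (by omega)⟩
        · push_neg
          exact fun p hp => by have := h3 p hp; omega
    rw [h]
    exact Finset.card_singleton _
  have e3 : (((Pfam k).filter (fun S => ∃ p ∈ S, tv p = 0)).filter
      (fun S => ∃ p ∈ S, tv p = 2)).card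
      = ((Pfam k).filter (fun S => (∃ p ∈ S, tv p = 0) ∧ (∃ p ∈ S, tv p = 2))).card := by
    apply congrArg Finset.card
    ext S
    simp only [Finset.mem_filter]
    exact and_assoc
  omega

end StripAux
namespace StripAux

noncomputable def IIfam (n : ℕ) : Finset (Finset (ℤ × ℤ)) :=
  (canonFam n).filter (fun S => ¬ ∀ p ∈ S, tv p ≤ 2)

noncomputable def PXfam (k : ℕ) : Finset (Finset (ℤ × ℤ)) :=
  (Pfam k).filter (fun S => (∃ p ∈ S, tv p = 0) ∧ (∃ p ∈ S, tv p = 2))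

lemma pp_tv_range {S : Finset (ℤ × ℤ)} (hPP : PP S) :
    ∀ p ∈ S, 0 ≤ tv p ∧ tv p ≤ 2 := by
  intro p hp
  have hpar := tv_parity p
  have hst := hPP.2.2.2 p hp
  rcases Int.emod_two_eq p.1 with h | h
  · rcases hst.1 h with h' | h' <;> omega
  · have := hst.2 h; omega

lemma c02 : cellAt 0 2 = ((0 : ℤ), (1 : ℤ)) := by
  norm_num [cellAt]

/-- structure facts about type-II canonical sets -/
lemma ii_facts {n : ℕ} {S : Finset (ℤ × ℤ)} (hcan : Canon n S)
    (hno : ¬ ∀ p ∈ S, tv p ≤ 2) :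
    (∀ p ∈ S, 1 ≤ tv p ∧ tv p ≤ 3) ∧ (∀ p ∈ S, p.1 = 0 → p = ((0:ℤ),(1:ℤ)))
      ∧ ((0:ℤ),(1:ℤ)) ∈ S ∧ (∃ u ∈ S, tv u = 1) ∧ (∃ w ∈ S, tv w = 3) := by
  push_neg at hno
  obtain ⟨w, hw, hw2⟩ := hno
  have hw3 : tv w = 3 := by
    have := canon_tv_le3 hcan w hw
    omega
  have hge1 : ∀ p ∈ S, 1 ≤ tv p ∧ tv p ≤ 3 := by
    intro p hp
    have h1 := hcan.2.2.2.2.1 w hw p hp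
    have := canon_tv_le3 hcan p hp
    omega
  have hcol0 : ∀ p ∈ S, p.1 = 0 → p = ((0:ℤ),(1:ℤ)) := by
    intro p hp hp0
    have hpar := tv_parity p
    have h1 := hge1 p hp
    have htv : tv p = 2 := by omega
    rw [← c02]
    exact eq_cellAt hp0 htv
  obtain ⟨z, hz, hz0⟩ := hcan.2.1
  obtain ⟨u, hu, hu1⟩ := hcan.2.2.2.2.2.1
  have hu1' : tv u = 1 := by have := hge1 u hu; omega
  exact ⟨hge1, hcol0, hcol0 z hz hz0 ▸ hz, ⟨u, hu, hu1'⟩, ⟨w, hw, hw3⟩⟩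

lemma vsum1 : ((-1, 0) : ℤ × ℤ) + ((1, 0) : ℤ × ℤ) = 0 := by decide
lemma vsum2 : ((1, 0) : ℤ × ℤ) + ((-1, 0) : ℤ × ℤ) = 0 := by decide
lemma tvm1 : tv ((-1, 0) : ℤ × ℤ) = -1 := by decide
lemma tvp1 : tv ((1, 0) : ℤ × ℤ) = 1 := by decide

lemma iifam_card {n : ℕ} (hn : 2 ≤ n) : (IIfam n).card = (PXfam (n - 1)).card := by
  apply Finset.card_nbij'
    (i := fun S => translateSet (-1, 0) (S.erase ((0:ℤ),(1:ℤ))))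
    (j := fun T => insert ((0:ℤ),(1:ℤ)) (translateSet (1, 0) T))
  · -- forward map lands in PXfam (n-1)
    intro S hS
    obtain ⟨hmem, hno⟩ := Finset.mem_filter.1 hS
    have hcan := mem_canonFam.1 hmem
    obtain ⟨hge, hcol0, h01, ⟨u, hu, hu1⟩, ⟨w, hw, hw3⟩⟩ := ii_facts hcan hno
    have hmm : ∀ p, p ∈ translateSet (-1, 0) (S.erase ((0:ℤ),(1:ℤ))) ↔
        ∃ q ∈ S, q ≠ ((0:ℤ),(1:ℤ)) ∧ q + (-1, 0) = p := by
      intro p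
      rw [mem_translate]
      constructor
      · rintro ⟨q, hq, rfl⟩
        obtain ⟨hne, hq'⟩ := Finset.mem_erase.1 hq
        exact ⟨q, hq', hne, rfl⟩
      · rintro ⟨q, hq, hne, rfl⟩
        exact ⟨q, Finset.mem_erase.2 ⟨hne, hq⟩, rfl⟩
    have hcolge : ∀ q ∈ S, q ≠ ((0:ℤ),(1:ℤ)) → 1 ≤ q.1 := by
      intro q hq hne
      have := hcan.2.2.1 q hq
      rcases eq_or_lt_of_le this with h | h
      · exact absurd (hcol0 q hq h.symm) hne
      · omega
    refine Finset.mem_filter.2 ⟨mem_Pfam.2 ⟨?_, ?_, ?_, ?_, ?_⟩, ?_, ?_⟩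
    · rw [card_translate, Finset.card_erase_of_mem h01, hcan.1]
    · -- column 0 occupied
      have hu1c : 1 ≤ u.1 := hcolge u hu (by
        intro he; rw [he] at hu1; norm_num [tv] at hu1)
      obtain ⟨q1, hq1, hq1'⟩ := interval_of_pred hcan.2.2.1 hcan.2.2.2.2.2.2 u hu 1
        (by omega) hu1c
      refine ⟨q1 + (-1, 0), (hmm _).2 ⟨q1, hq1, ?_, rfl⟩, by
        simp only [Prod.fst_add]; omega⟩
      intro he
      rw [he] at hq1'
      norm_num at hq1'
    · -- columns nonnegative
      intro p hp
      obtain ⟨q, hq, hne, rfl⟩ := (hmm p).1 hp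
      have := hcolge q hq hne
      simp only [Prod.fst_add]
      omega
    · -- predecessor closure
      intro p hp
      obtain ⟨q, hq, hne, rfl⟩ := (hmm p).1 hp
      simp only [Prod.fst_add]
      by_cases h0 : q.1 + (-1, 0).1 = 0
      · exact Or.inl h0
      · have hq1 : 2 ≤ q.1 := by
          have := hcolge q hq hne
          simp only at h0 ⊢
          omega
        obtain ⟨r, hr, hr'⟩ := (hcan.2.2.2.2.2.2 q hq).resolve_left (by omega)
        refine Or.inr ⟨r + (-1, 0), (hmm _).2 ⟨r, hr, ?_, rfl⟩, by
          simp only [Prod.fst_add]; omega⟩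
        intro he
        rw [he] at hr'
        norm_num at hr'
        omega
    · -- states
      intro p hp
      obtain ⟨q, hq, hne, rfl⟩ := (hmm p).1 hp
      have hq1 := hge q hq
      have hpar := tv_parity q
      rw [tv_add, tvm1]
      simp only [Prod.fst_add]
      exact ⟨fun hev => by omega, fun hod => by omega⟩
    · -- contains a 0-cell
      refine ⟨u + (-1, 0), (hmm _).2 ⟨u, hu, ?_, rfl⟩, by rw [tv_add, tvm1]; omega⟩
      intro he
      rw [he] at hu1
      norm_num [tv] at hu1
    · -- contains a 2-cell
      refine ⟨w + (-1, 0), (hmm _).2 ⟨w, hw, ?_, rfl⟩, by rw [tv_add, tvm1]; omega⟩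
      intro he
      rw [he] at hw3
      norm_num [tv] at hw3
  · -- backward map lands in IIfam n
    intro T hT
    obtain ⟨hmem, ⟨a0, ha0, ha0'⟩, ⟨a2, ha2, ha2'⟩⟩ := Finset.mem_filter.1 hT
    obtain ⟨hcard, hPP⟩ := mem_Pfam.1 hmem
    have h01U : ((0:ℤ),(1:ℤ)) ∉ translateSet (1, 0) T := by
      intro h
      obtain ⟨q, hq, hq'⟩ := mem_translate.1 h
      have := congrArg Prod.fst hq'
      simp only [Prod.fst_add] at this
      have := hPP.2.1 q hq
      omega
    refine Finset.mem_filter.2 ⟨mem_canonFam.2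
      ⟨?_, ⟨((0:ℤ),(1:ℤ)), Finset.mem_insert_self _ _, rfl⟩, ?_, ?_, ?_, ?_, ?_⟩, ?_⟩
    · rw [Finset.card_insert_of_notMem h01U, card_translate, hcard]
      omega
    · -- columns nonnegative
      intro p hp
      rcases Finset.mem_insert.1 hp with rfl | hp'
      · norm_num
      · obtain ⟨q, hq, rfl⟩ := mem_translate.1 hp'
        have := hPP.2.1 q hq
        simp only [Prod.fst_add]
        omega
    · -- tv nonnegative
      intro p hp
      rcases Finset.mem_insert.1 hp with rfl | hp'
      · norm_num [tv]
      · obtain ⟨q, hq, rfl⟩ := mem_translate.1 hp'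
        have := pp_tv_range hPP q hq
        rw [tv_add, tvp1]
        omega
    · -- span ≤ 2
      have hr : ∀ p ∈ insert ((0:ℤ),(1:ℤ)) (translateSet (1, 0) T),
          1 ≤ tv p ∧ tv p ≤ 3 := by
        intro p hp
        rcases Finset.mem_insert.1 hp with rfl | hp'
        · norm_num [tv]
        · obtain ⟨q, hq, rfl⟩ := mem_translate.1 hp'
          have := pp_tv_range hPP q hq
          rw [tv_add, tvp1]
          omega
      intro p hp q hq
      have := hr p hp
      have := hr q hq
      omega
    · -- a cell with tv ≤ 1
      refine ⟨a0 + (1, 0), Finset.mem_insert_of_mem (mem_translate.2 ⟨a0, ha0, rfl⟩), ?_⟩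
      rw [tv_add, tvp1]
      omega
    · -- predecessor closure
      intro p hp
      rcases Finset.mem_insert.1 hp with rfl | hp'
      · exact Or.inl rfl
      · obtain ⟨q, hq, rfl⟩ := mem_translate.1 hp'
        by_cases h0 : q.1 = 0
        · refine Or.inr ⟨((0:ℤ),(1:ℤ)), Finset.mem_insert_self _ _, ?_⟩
          simp only [Prod.fst_add]
          omega
        · obtain ⟨r, hr, hr'⟩ := (hPP.2.2.1 q hq).resolve_left h0
          refine Or.inr ⟨r + (1, 0), Finset.mem_insert_of_mem
            (mem_translate.2 ⟨r, hr, rfl⟩), ?_⟩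
          simp only [Prod.fst_add]
          omega
    · -- not all tv ≤ 2
      intro hall
      have := hall (a2 + (1, 0))
        (Finset.mem_insert_of_mem (mem_translate.2 ⟨a2, ha2, rfl⟩))
      rw [tv_add, tvp1] at this
      omega
  · -- left inverse
    intro S hS
    obtain ⟨hmem, hno⟩ := Finset.mem_filter.1 hS
    have hcan := mem_canonFam.1 hmem
    obtain ⟨hge, hcol0, h01, _, _⟩ := ii_facts hcan hno
    beta_reduce
    rw [translate_translate, vsum1, translate_zero, Finset.insert_erase h01]
  · -- right inverse
    intro T hT
    obtain ⟨hmem, _⟩ := Finset.mem_filter.1 hT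
    obtain ⟨hcard, hPP⟩ := mem_Pfam.1 hmem
    have h01U : ((0:ℤ),(1:ℤ)) ∉ translateSet (1, 0) T := by
      intro h
      obtain ⟨q, hq, hq'⟩ := mem_translate.1 h
      have := congrArg Prod.fst hq'
      simp only [Prod.fst_add] at this
      have := hPP.2.1 q hq
      omega
    beta_reduce
    rw [Finset.erase_insert h01U, translate_translate, vsum2, translate_zero]

end StripAux
namespace StripAux

noncomputable def pc (n : ℕ) : ℕ := (Pfam n).card
noncomputable def pe (n : ℕ) : ℕ := (PEfam n).card
noncomputable def po (n : ℕ) : ℕ := (POfam n).card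
noncomputable def ac (n : ℕ) : ℕ := (canonFam n).card

lemma ac1 : ac 1 = 1 := by decide
lemma pc1 : pc 1 = 2 := by decide
lemma pc2 : pc 2 = 3 := by decide
lemma pc3 : pc 3 = 5 := by decide

lemma pc_split (n : ℕ) : pc n = pe n + po n := pfam_card_split n

lemma po_succ (m : ℕ) : po (m + 2) = pe (m + 1) := by
  have h := po_card (n := m + 2) (by omega)
  have e : m + 2 - 1 = m + 1 := by omega
  rw [e] at h
  exact h

lemma pc_fib (m : ℕ) : pc (m + 4) = pc (m + 3) + pc (m + 2) := by
  have h3 : pc (m + 4) = pe (m + 4) + po (m + 4) := pc_split _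
  have h4 : pe (m + 4) = (PEcell 0 (m + 4)).card + (PEcell 2 (m + 4)).card
      + (PEboth (m + 4)).card := pe_card_split _
  have h5 := pecell_card (n := m + 4) (e := 0) (by omega) (Or.inl rfl)
  have h6 := pecell_card (n := m + 4) (e := 2) (by omega) (Or.inr rfl)
  have h7 := peboth_card (n := m + 4) (by omega)
  have e1 : m + 4 - 1 = m + 3 := by omega
  have e2 : m + 4 - 2 = m + 2 := by omega
  rw [e1] at h5 h6
  rw [e2] at h7
  have h8 : po (m + 4) = pe (m + 3) := po_succ (m + 2)
  have h9 : po (m + 3) = pe (m + 2) := po_succ (m + 1)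
  have h10 : pc (m + 3) = pe (m + 3) + po (m + 3) := pc_split _
  have h11 : pc (m + 2) = pe (m + 2) + po (m + 2) := pc_split _
  have h5' : (PEcell 0 (m + 4)).card = po (m + 3) := h5
  have h6' : (PEcell 2 (m + 4)).card = po (m + 3) := h6
  have h7' : (PEboth (m + 4)).card = po (m + 2) := h7
  omega

lemma ac_formula (m : ℕ) : ac (m + 2) + 2 = pc (m + 2) + pc (m + 1) := by
  have h1 : ((canonFam (m + 2)).filter (fun S => ∀ p ∈ S, tv p ≤ 2)).card
      + ((canonFam (m + 2)).filter (fun S => ¬ ∀ p ∈ S, tv p ≤ 2)).card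
      = (canonFam (m + 2)).card :=
    Finset.card_filter_add_card_filter_not _
  have h2 : ((canonFam (m + 2)).filter (fun S => ∀ p ∈ S, tv p ≤ 2)).card = pc (m + 2) :=
    congrArg Finset.card (ifam_eq (by omega))
  have h3 : ((canonFam (m + 2)).filter (fun S => ¬ ∀ p ∈ S, tv p ≤ 2)).card
      = (PXfam (m + 2 - 1)).card := iifam_card (by omega)
  have e1 : m + 2 - 1 = m + 1 := by omega
  rw [e1] at h3
  have h4 : (PXfam (m + 1)).card + 2 = pc (m + 1) := pxfam_card (by omega)
  unfold ac
  omega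

lemma ac2 : ac 2 = 3 := by
  have h := ac_formula 0
  norm_num at h
  have := pc2; have := pc1
  omega

lemma ac3 : ac 3 = 6 := by
  have h := ac_formula 1
  norm_num at h
  have := pc3; have := pc2
  omega

lemma pc_fib3 (m : ℕ) : pc (m + 3) = pc (m + 2) + pc (m + 1) := by
  cases m with
  | zero =>
    norm_num
    rw [pc3, pc2, pc1]
  | succ m' =>
    have h := pc_fib m'
    have e1 : m' + 1 + 3 = m' + 4 := by omega
    have e2 : m' + 1 + 2 = m' + 3 := by omega
    have e3 : m' + 1 + 1 = m' + 2 := by omega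
    rw [e1, e2, e3]
    exact h

lemma ac_rec (m : ℕ) : ac (m + 4) + ac (m + 1) = 2 * ac (m + 3) := by
  cases m with
  | zero =>
    have a4 := ac_formula 2
    have a3 := ac_formula 1
    have f4 := pc_fib3 1
    have h1 := pc3; have h2 := pc2; have h3 := pc1; have h4 := ac1
    norm_num at a4 a3 f4 ⊢
    omega
  | succ m' =>
    have a5 := ac_formula (m' + 3)
    rw [show m' + 3 + 2 = m' + 5 from by omega, show m' + 3 + 1 = m' + 4 from by omega] at a5
    have a4 := ac_formula (m' + 2)
    rw [show m' + 2 + 2 = m' + 4 from by omega, show m' + 2 + 1 = m' + 3 from by omega] at a4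
    have a2 := ac_formula m'
    have f5 := pc_fib3 (m' + 2)
    rw [show m' + 2 + 3 = m' + 5 from by omega, show m' + 2 + 2 = m' + 4 from by omega,
      show m' + 2 + 1 = m' + 3 from by omega] at f5
    have f3 := pc_fib3 m'
    rw [show m' + 1 + 4 = m' + 5 from by omega, show m' + 1 + 1 = m' + 2 from by omega,
      show m' + 1 + 3 = m' + 4 from by omega]
    omega

end StripAux


/-- The sequence `a n = stripCount 4 n` counting hexanimals embeddable in a strip of
height 4 satisfies the linear recurrence `a n = 2 a (n-1) - a (n-3)` for `n ≥ 4`, with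
`a 1 = 1`, `a 2 = 3`, `a 3 = 6`. -/
theorem stripCount_four_recurrence :
    stripCount 4 1 = 1 ∧ stripCount 4 2 = 3 ∧ stripCount 4 3 = 6 ∧
    ∀ n : ℕ, 4 ≤ n →
      (stripCount 4 n : ℤ) = 2 * stripCount 4 (n - 1) - stripCount 4 (n - 3) := by
  have hsc : ∀ n, stripCount 4 n = StripAux.ac n := fun n => StripAux.stripCount_eq n
  refine ⟨by rw [hsc, StripAux.ac1], by rw [hsc, StripAux.ac2], by rw [hsc, StripAux.ac3], ?_⟩
  intro n hn
  obtain ⟨m, rfl⟩ : ∃ m, n = m + 4 := ⟨n - 4, by omega⟩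
  have e1 : m + 4 - 1 = m + 3 := by omega
  have e3 : m + 4 - 3 = m + 1 := by omega
  rw [e1, e3, hsc, hsc, hsc]
  have := StripAux.ac_rec m
  omega
end
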